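/- arXiv:2409.09526 — 10 statements merged into one kernel-verified Lean document; each statement's English description precedes it below -/
import Mathlib

section
/- Let M be a real symmetric positive semidefinite N×N matrix, S a subset of {1,…,N} with complement Sᶜ, J the diagonal matrix with J_ii = 1 for i ∈ S and J_ii = −1 for i ∈ Sᶜ, and Q the block-diagonal part of M with respect to the partition (S, Sᶜ). Then for every vector u and scalar λ with M u = λ Q u, one has M (J u) = (2 − λ) Q (J u); that is, the (M,Q)-GFT has the spectral folding property: (u, λ) a generalized eigenpair implies (J u, 2 − λ) is a generalized eigenpair. -/
open Matrix

/-- Spectral folding property of the (M, Q(S))-GFT: if (u, λ) is a generalized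
eigenpair of (M, Q), i.e. M u = λ Q u, then (J u, 2 − λ) is also a generalized
eigenpair, where J = diag(±1) according to membership in S and Q is the
block-diagonal part of M with respect to the partition (S, Sᶜ). -/
theorem spectral_folding_eigenpair
    {N : ℕ} (hN : 1 ≤ N)
    (M : Matrix (Fin N) (Fin N) ℝ) (hM : M.PosSemidef)
    (S : Finset (Fin N))
    (J : Matrix (Fin N) (Fin N) ℝ)
    (hJ : J = Matrix.diagonal (fun i => if i ∈ S then (1 : ℝ) else -1))
    (Q : Matrix (Fin N) (Fin N) ℝ)
    (hQ : ∀ i j, Q i j =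
      if (i ∈ S ∧ j ∈ S) ∨ (i ∉ S ∧ j ∉ S) then M i j else 0)
    (u : Fin N → ℝ) (lam : ℝ)
    (h : M.mulVec u = lam • Q.mulVec u) :
    M.mulVec (J.mulVec u) = (2 - lam) • Q.mulVec (J.mulVec u) ∧
      (u ≠ 0 → J.mulVec u ≠ 0) := by
  have hQJ : Q * J = J * Q := by
    ext i j
    simp only [hJ, Matrix.mul_diagonal, Matrix.diagonal_mul, hQ]
    by_cases hi : i ∈ S <;> by_cases hj : j ∈ S <;> simp [hi, hj] <;> ring
  have hMJ : M * J = J * ((2 : ℝ) • Q - M) := by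
    ext i j
    simp only [hJ, Matrix.mul_diagonal, Matrix.diagonal_mul, Matrix.sub_apply,
      Matrix.smul_apply, smul_eq_mul, hQ]
    by_cases hi : i ∈ S <;> by_cases hj : j ∈ S <;> simp [hi, hj] <;> ring
  have hJJ : J * J = 1 := by
    rw [hJ, Matrix.diagonal_mul_diagonal]
    convert Matrix.diagonal_one using 2
    ext i
    by_cases hi : i ∈ S <;> simp [hi]
  constructor
  · calc M.mulVec (J.mulVec u) = (M * J).mulVec u := by rw [Matrix.mulVec_mulVec]
      _ = J.mulVec (((2 : ℝ) • Q - M).mulVec u) := by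
          rw [hMJ, ← Matrix.mulVec_mulVec]
      _ = J.mulVec ((2 - lam) • Q.mulVec u) := by
          congr 1
          rw [Matrix.sub_mulVec, Matrix.smul_mulVec, h, sub_smul]
      _ = (2 - lam) • (J * Q).mulVec u := by
          rw [Matrix.mulVec_smul, Matrix.mulVec_mulVec]
      _ = (2 - lam) • Q.mulVec (J.mulVec u) := by
          rw [← hQJ, ← Matrix.mulVec_mulVec]
  · intro hu hJu
    apply hu
    have : (J * J).mulVec u = J.mulVec (J.mulVec u) := (Matrix.mulVec_mulVec _ _ _).symm
    rw [hJJ, Matrix.one_mulVec, hJu, Matrix.mulVec_zero] at this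
    exact this
end

section
/- Let M be a real symmetric positive semidefinite N×N matrix, S ⊆ {1,…,N}, and Q the block-diagonal part of M with respect to (S, Sᶜ), assumed positive definite. Let λ_1 ≤ λ_2 ≤ … ≤ λ_N be the generalized eigenvalues of (M, Q) listed in nondecreasing order with multiplicity (equivalently, the eigenvalues of the symmetric matrix Q^{−1/2} M Q^{−1/2}). Then the spectrum is symmetric about 1: λ_k + λ_{N+1−k} = 2 for every k ∈ {1,…,N}. In particular, for every real λ, dim ker(M − λ Q) = dim ker(M − (2 − λ) Q). -/
open Matrix Polynomial

/-- Similar matrices have equal characteristic polynomials. -/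
lemma sfs_charpoly_conj {n : Type*} [Fintype n] [DecidableEq n]
    (P A : Matrix n n ℝ) (hP : IsUnit P.det) :
    (P * A * P⁻¹).charpoly = A.charpoly := by
  have h1 : P * P⁻¹ = 1 := Matrix.mul_nonsing_inv P hP
  have h2 : (C.mapMatrix P : Matrix n n ℝ[X]) * C.mapMatrix P⁻¹ = 1 := by
    rw [← _root_.map_mul, h1, _root_.map_one]
  have key : charmatrix (P * A * P⁻¹) =
      C.mapMatrix P * charmatrix A * C.mapMatrix P⁻¹ := by
    unfold charmatrix
    rw [Matrix.mul_sub, Matrix.sub_mul, ← _root_.map_mul, ← _root_.map_mul]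
    congr 1
    have : (C.mapMatrix P : Matrix n n ℝ[X]) * Matrix.scalar n (X : ℝ[X]) =
        Matrix.scalar n (X : ℝ[X]) * C.mapMatrix P := by
      refine Matrix.ext fun i j => ?_
      simp only [Matrix.scalar_apply, Matrix.mul_diagonal, Matrix.diagonal_mul]
      exact mul_comm _ _
    rw [this, Matrix.mul_assoc, h2, Matrix.mul_one]
  rw [Matrix.charpoly, Matrix.charpoly, key, Matrix.det_mul, Matrix.det_mul]
  have h3 : ((C.mapMatrix P : Matrix n n ℝ[X])).det *
      ((C.mapMatrix P⁻¹ : Matrix n n ℝ[X])).det = 1 := by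
    rw [← Matrix.det_mul, h2, Matrix.det_one]
  calc (C.mapMatrix P).det * (charmatrix A).det * (C.mapMatrix P⁻¹).det
      = (charmatrix A).det * ((C.mapMatrix P).det * (C.mapMatrix P⁻¹).det) := by ring
    _ = (charmatrix A).det := by rw [h3, mul_one]

/-- Characteristic polynomial of a diagonal matrix. -/
lemma sfs_charpoly_diagonal {n : Type*} [Fintype n] [DecidableEq n] (d : n → ℝ) :
    (Matrix.diagonal d).charpoly = ∏ i, (X - C (d i)) := by
  have : charmatrix (Matrix.diagonal d) =
      Matrix.diagonal (fun i => (X : ℝ[X]) - C (d i)) := by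
    ext i j
    by_cases h : i = j
    · subst h; simp [charmatrix_apply_eq]
    · rw [charmatrix_apply_ne _ _ _ h, Matrix.diagonal_apply_ne _ h,
        Matrix.diagonal_apply_ne _ h, map_zero, neg_zero]
  rw [Matrix.charpoly, this, Matrix.det_diagonal]

/-- The generalized spectrum of (M, Q(S)) is symmetric about 1:
if λ₁ ≤ … ≤ λ_N are the generalized eigenvalues (encoded by a sorted
Q-orthonormal generalized eigendecomposition M U = Q U Λ, Uᵀ Q U = I),
then λ_k + λ_{N+1−k} = 2 for all k, and for every real λ the kernels of
M − λ Q and M − (2 − λ) Q have the same dimension. -/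
theorem spectral_folding_spectrum_symmetric
    {N : ℕ} (hN : 1 ≤ N)
    (M : Matrix (Fin N) (Fin N) ℝ) (hM : M.PosSemidef)
    (S : Finset (Fin N))
    (Q : Matrix (Fin N) (Fin N) ℝ)
    (hQ : ∀ i j, Q i j =
      if (i ∈ S ∧ j ∈ S) ∨ (i ∉ S ∧ j ∉ S) then M i j else 0)
    (hQpd : Q.PosDef)
    (lam : Fin N → ℝ) (hlam : Monotone lam)
    (U : Matrix (Fin N) (Fin N) ℝ)
    (hUQU : Uᵀ * Q * U = 1)
    (hMU : M * U = Q * U * Matrix.diagonal lam) :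
    (∀ k : Fin N, lam k + lam k.rev = 2) ∧
      (∀ μ : ℝ,
        Module.finrank ℝ (LinearMap.ker (M - μ • Q).mulVecLin) =
          Module.finrank ℝ (LinearMap.ker (M - (2 - μ) • Q).mulVecLin)) := by
  classical
  -- the sign matrix
  set s : Fin N → ℝ := fun i => if i ∈ S then 1 else -1 with hs_def
  set D : Matrix (Fin N) (Fin N) ℝ := Matrix.diagonal s with hD_def
  have hss : ∀ i, s i * s i = 1 := by
    intro i; by_cases h : i ∈ S <;> simp [hs_def, h]
  have hDD : D * D = 1 := by
    rw [hD_def, Matrix.diagonal_mul_diagonal]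
    ext i j
    by_cases h : i = j
    · subst h; simp [hss i]
    · simp [Matrix.diagonal_apply_ne _ h, Matrix.one_apply_ne h]
  have hDMD : D * M * D = (2:ℝ) • Q - M := by
    ext i j
    have : (D * M * D) i j = s i * M i j * s j := by
      rw [hD_def, Matrix.mul_diagonal, Matrix.diagonal_mul]
    rw [this]
    simp only [Matrix.sub_apply, Matrix.smul_apply, smul_eq_mul, hQ i j]
    by_cases hi : i ∈ S <;> by_cases hj : j ∈ S <;>
      simp [hs_def, hi, hj] <;> ring
  have hDQD : D * Q * D = Q := by
    ext i j
    have : (D * Q * D) i j = s i * Q i j * s j := by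
      rw [hD_def, Matrix.mul_diagonal, Matrix.diagonal_mul]
    rw [this, hQ i j]
    by_cases hi : i ∈ S <;> by_cases hj : j ∈ S <;>
      simp [hs_def, hi, hj] <;> ring
  have hDQ : D * Q = Q * D := by
    have := congrArg (fun X => X * D) hDQD
    simpa [Matrix.mul_assoc, hDD] using this
  have hMD : M * D = D * ((2:ℝ) • Q - M) := by
    have := congrArg (fun X => D * X) hDMD
    calc M * D = D * (D * M * D) := by
          rw [show D * (D * M * D) = (D * D) * M * D by noncomm_ring, hDD, Matrix.one_mul]
      _ = D * ((2:ℝ) • Q - M) := by rw [hDMD]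
  ---- Part 2: kernels
  have hker : ∀ μ : ℝ,
      Module.finrank ℝ (LinearMap.ker (M - μ • Q).mulVecLin) =
        Module.finrank ℝ (LinearMap.ker (M - (2 - μ) • Q).mulVecLin) := by
    intro μ
    set A : Matrix (Fin N) (Fin N) ℝ := M - μ • Q with hA_def
    have hB : M - (2 - μ) • Q = (-1 : ℝ) • (D * A * D) := by
      rw [hA_def, Matrix.mul_sub, Matrix.sub_mul]
      rw [show D * (μ • Q) * D = μ • (D * Q * D) by
        simp [Matrix.smul_mul, Matrix.mul_smul]]
      rw [hDMD, hDQD]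
      ext i j
      simp only [Matrix.sub_apply, Matrix.smul_apply, smul_eq_mul]
      ring
    -- linear equivalence given by D
    have hDcomp : D.mulVecLin ∘ₗ D.mulVecLin = LinearMap.id := by
      rw [← Matrix.mulVecLin_mul, hDD, Matrix.mulVecLin_one]
    set eD : (Fin N → ℝ) ≃ₗ[ℝ] (Fin N → ℝ) :=
      LinearEquiv.ofLinear D.mulVecLin D.mulVecLin hDcomp hDcomp with heD_def
    have hkerD : LinearMap.ker D.mulVecLin = ⊥ :=
      LinearMap.ker_eq_bot.mpr eD.injective
    rw [hB]
    have hsmul : ((-1 : ℝ) • (D * A * D)).mulVecLin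
        = (-1 : ℝ) • (D * A * D).mulVecLin := by
      apply LinearMap.ext; intro v
      simp [Matrix.mulVecLin_apply, Matrix.smul_mulVec]
    rw [hsmul, LinearMap.ker_smul _ (-1 : ℝ) (by norm_num)]
    rw [Matrix.mulVecLin_mul, Matrix.mulVecLin_mul, LinearMap.ker_comp,
      LinearMap.ker_comp, hkerD, Submodule.comap_bot]
    have : Submodule.comap D.mulVecLin (LinearMap.ker A.mulVecLin)
        = Submodule.map (eD.symm : (Fin N → ℝ) →ₗ[ℝ] (Fin N → ℝ)) (LinearMap.ker A.mulVecLin) :=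
      Submodule.comap_equiv_eq_map_symm eD (LinearMap.ker A.mulVecLin)
    rw [this]
    exact (LinearEquiv.finrank_map_eq eD.symm (LinearMap.ker A.mulVecLin)).symm
  refine ⟨?_, hker⟩
  ---- Part 1: eigenvalue symmetry
  -- invertibility facts
  have hUdet : IsUnit U.det := Matrix.isUnit_det_of_left_inverse hUQU
  have hQdet : IsUnit Q.det := isUnit_iff_ne_zero.mpr hQpd.det_pos.ne'
  have hUinv : U⁻¹ = Uᵀ * Q := Matrix.inv_eq_left_inv hUQU
  set Λ : Matrix (Fin N) (Fin N) ℝ := Matrix.diagonal lam with hΛ_def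
  set g : Fin N → ℝ := fun k => 2 - lam k with hg_def
  set Λ' : Matrix (Fin N) (Fin N) ℝ := Matrix.diagonal g with hΛ'_def
  set V : Matrix (Fin N) (Fin N) ℝ := D * U with hV_def
  have hVQV : Vᵀ * Q * V = 1 := by
    have hDT : Dᵀ = D := Matrix.diagonal_transpose s
    calc Vᵀ * Q * V = Uᵀ * (D * Q * D) * U := by
          rw [hV_def, Matrix.transpose_mul, hDT]; noncomm_ring
      _ = 1 := by rw [hDQD, hUQU]
  have hVdet : IsUnit V.det := Matrix.isUnit_det_of_left_inverse hVQV
  have hVinv : V⁻¹ = Vᵀ * Q := Matrix.inv_eq_left_inv hVQV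
  have hMV : M * V = Q * V * Λ' := by
    have h1 : M * V = D * ((2:ℝ) • (Q * U) - Q * U * Λ) := by
      rw [hV_def, ← Matrix.mul_assoc, hMD]
      rw [Matrix.mul_assoc, Matrix.sub_mul, ← hMU, Matrix.smul_mul]
    have h0 : (2:ℝ) • (1 : Matrix (Fin N) (Fin N) ℝ) - Λ = Λ' := by
      ext i j
      by_cases h : i = j
      · subst h
        simp [hΛ_def, hΛ'_def, hg_def, Matrix.one_apply, Matrix.diagonal_apply]
      · simp [hΛ_def, hΛ'_def, Matrix.one_apply_ne h, Matrix.diagonal_apply_ne _ h]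
    have h2 : (2:ℝ) • (Q * U) - Q * U * Λ = Q * U * Λ' := by
      rw [← h0, Matrix.mul_sub, Matrix.mul_smul, Matrix.mul_one]
    rw [h1, h2, show D * (Q * U * Λ') = Q * V * Λ' by
      rw [← Matrix.mul_assoc, ← Matrix.mul_assoc, hDQ, Matrix.mul_assoc Q D U, ← hV_def]]
  -- both diagonalize Q⁻¹ M
  have hQM_U : Q⁻¹ * M = U * Λ * U⁻¹ := by
    have : M = Q * U * Λ * U⁻¹ := by
      rw [← hMU, Matrix.mul_nonsing_inv_cancel_right _ _ hUdet]
    rw [this]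
    calc Q⁻¹ * (Q * U * Λ * U⁻¹) = (Q⁻¹ * Q) * (U * Λ * U⁻¹) := by noncomm_ring
      _ = U * Λ * U⁻¹ := by rw [Matrix.nonsing_inv_mul _ hQdet, Matrix.one_mul]
  have hQM_V : Q⁻¹ * M = V * Λ' * V⁻¹ := by
    have : M = Q * V * Λ' * V⁻¹ := by
      rw [← hMV, Matrix.mul_nonsing_inv_cancel_right _ _ hVdet]
    rw [this]
    calc Q⁻¹ * (Q * V * Λ' * V⁻¹) = (Q⁻¹ * Q) * (V * Λ' * V⁻¹) := by noncomm_ring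
      _ = V * Λ' * V⁻¹ := by rw [Matrix.nonsing_inv_mul _ hQdet, Matrix.one_mul]
  have hcp : Λ.charpoly = Λ'.charpoly := by
    have h1 : (U * Λ * U⁻¹).charpoly = Λ.charpoly := sfs_charpoly_conj U Λ hUdet
    have h2 : (V * Λ' * V⁻¹).charpoly = Λ'.charpoly := sfs_charpoly_conj V Λ' hVdet
    rw [← h1, ← h2, ← hQM_U, ← hQM_V]
  -- multiset of eigenvalues
  have hmult : (Finset.univ.val.map lam) = (Finset.univ.val.map g) := by
    have h1 : Λ.charpoly.roots = Finset.univ.val.map lam := by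
      rw [hΛ_def, sfs_charpoly_diagonal]
      rw [show (∏ i, (X - C (lam i))) =
        ((Finset.univ.val.map lam).map fun a => X - C a).prod by
          rw [Multiset.map_map]; rfl]
      exact roots_multiset_prod_X_sub_C _
    have h2 : Λ'.charpoly.roots = Finset.univ.val.map g := by
      rw [hΛ'_def, sfs_charpoly_diagonal]
      rw [show (∏ i, (X - C (g i))) =
        ((Finset.univ.val.map g).map fun a => X - C a).prod by
          rw [Multiset.map_map]; rfl]
      exact roots_multiset_prod_X_sub_C _
    rw [← h1, ← h2, hcp]
  -- sorted lists
  set g' : Fin N → ℝ := fun k => 2 - lam k.rev with hg'_def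
  have hmult' : (Finset.univ.val.map lam) = (Finset.univ.val.map g') := by
    rw [hmult]
    have : (Finset.univ.val.map g') = Multiset.map g (Multiset.map Fin.rev Finset.univ.val) := by
      rw [Multiset.map_map]; rfl
    rw [this]
    congr 1
    have := congrArg Finset.val (Finset.map_univ_equiv (Fin.revPerm (n := N)))
    simpa [Finset.map] using this.symm
  have hg'mono : Monotone g' := by
    intro a b hab
    simp only [hg'_def]
    have : b.rev ≤ a.rev := Fin.rev_le_rev.mpr hab
    have := hlam this
    linarith
  have hperm : List.Perm (List.ofFn lam) (List.ofFn g') := by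
    rw [← Multiset.coe_eq_coe, ← Fin.univ_val_map, ← Fin.univ_val_map]
    exact hmult'
  have hsorted1 : List.Pairwise (· ≤ ·) (List.ofFn lam) := by
    rw [List.pairwise_ofFn]
    intro i j hij; exact hlam hij.le
  have hsorted2 : List.Pairwise (· ≤ ·) (List.ofFn g') := by
    rw [List.pairwise_ofFn]
    intro i j hij; exact hg'mono hij.le
  have heq : lam = g' := by
    have := hperm.eq_of_pairwise' hsorted1 hsorted2
    exact List.ofFn_inj.mp this
  intro k
  have := congrFun heq k
  simp only [hg'_def] at this
  linarith
end

section
/- Let M be a real symmetric positive semidefinite N×N matrix, S ⊆ {1,…,N}, Q the block-diagonal part of M with respect to (S, Sᶜ) assumed positive definite, and U a Q-orthonormal generalized eigenbasis of (M,Q) with eigenvalues λ_1 ≤ … ≤ λ_N satisfying the folding pairing u_{N+1−k} = J u_k. Let L = {k : λ_k < 1}. Then for all k, l ∈ L: (u_k)_Sᵀ Q_S (u_l)_S = (1/2) δ_{kl} and (u_k)_{Sᶜ}ᵀ Q_{Sᶜ} (u_l)_{Sᶜ} = (1/2) δ_{kl}; in matrix form, U_{SL}ᵀ Q_S U_{SL}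 = (1/2) I and U_{SᶜL}ᵀ Q_{Sᶜ} U_{SᶜL} = (1/2) I. -/
open Matrix

/-- Under the spectral-folding setup, the low-frequency eigenvectors restricted
to S (resp. Sᶜ) are (1/2)-orthonormal with respect to Q_S = M_{SS}
(resp. Q_{Sᶜ} = M_{SᶜSᶜ}):
U_{SL}ᵀ Q_S U_{SL} = (1/2) I and U_{SᶜL}ᵀ Q_{Sᶜ} U_{SᶜL} = (1/2) I. -/
theorem low_freq_half_orthonormal
    {N : ℕ} (hN : 1 ≤ N)
    (M : Matrix (Fin N) (Fin N) ℝ) (hM : M.PosSemidef)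
    (S : Finset (Fin N))
    (J : Matrix (Fin N) (Fin N) ℝ)
    (hJ : J = Matrix.diagonal (fun i => if i ∈ S then (1 : ℝ) else -1))
    (Q : Matrix (Fin N) (Fin N) ℝ)
    (hQ : ∀ i j, Q i j =
      if (i ∈ S ∧ j ∈ S) ∨ (i ∉ S ∧ j ∉ S) then M i j else 0)
    (hQpd : Q.PosDef)
    (lam : Fin N → ℝ) (hlam : Monotone lam)
    (U : Matrix (Fin N) (Fin N) ℝ)
    (hUQU : Uᵀ * Q * U = 1)
    (hMU : M * U = Q * U * Matrix.diagonal lam)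
    (hfold : ∀ k : Fin N, (fun i => U i k.rev) = J.mulVec (fun i => U i k)) :
    (U.submatrix (Subtype.val : {i : Fin N // i ∈ S} → Fin N)
          (Subtype.val : {k : Fin N // lam k < 1} → Fin N))ᵀ *
        M.submatrix (Subtype.val : {i : Fin N // i ∈ S} → Fin N)
          (Subtype.val : {i : Fin N // i ∈ S} → Fin N) *
        U.submatrix (Subtype.val : {i : Fin N // i ∈ S} → Fin N)
          (Subtype.val : {k : Fin N // lam k < 1} → Fin N) =
      (1 / 2 : ℝ) • 1 ∧
    (U.submatrix (Subtype.val : {i : Fin N // i ∉ S} → Fin N)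
          (Subtype.val : {k : Fin N // lam k < 1} → Fin N))ᵀ *
        M.submatrix (Subtype.val : {i : Fin N // i ∉ S} → Fin N)
          (Subtype.val : {i : Fin N // i ∉ S} → Fin N) *
        U.submatrix (Subtype.val : {i : Fin N // i ∉ S} → Fin N)
          (Subtype.val : {k : Fin N // lam k < 1} → Fin N) =
      (1 / 2 : ℝ) • 1 := by
  -- entries of UᵀQU
  have hQU : ∀ k l : Fin N,
      ∑ j, ∑ i, U i k * Q i j * U j l = if k = l then (1:ℝ) else 0 := by
    intro k l
    have h := congrFun (congrFun hUQU k) l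
    simpa [Matrix.mul_apply, Matrix.one_apply, Finset.sum_mul, mul_assoc] using h
  -- UᵀMU = diagonal lam
  have hM' : Uᵀ * M * U = Matrix.diagonal lam := by
    calc Uᵀ * M * U = Uᵀ * (M * U) := by rw [Matrix.mul_assoc]
      _ = Uᵀ * (Q * U * Matrix.diagonal lam) := by rw [hMU]
      _ = (Uᵀ * Q * U) * Matrix.diagonal lam := by
            rw [← Matrix.mul_assoc, ← Matrix.mul_assoc]
      _ = Matrix.diagonal lam := by rw [hUQU, Matrix.one_mul]
  have hMsum : ∀ k l : Fin N,
      ∑ j, ∑ i, U i k * M i j * U j l = if k = l then lam k else 0 := by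
    intro k l
    have h := congrFun (congrFun hM' k) l
    simpa [Matrix.mul_apply, Matrix.diagonal_apply, Finset.sum_mul, mul_assoc] using h
  -- folding pointwise
  have hUrev : ∀ (k i : Fin N),
      U i k.rev = (if i ∈ S then (1:ℝ) else -1) * U i k := by
    intro k i
    have h := congrFun (hfold k) i
    rw [hJ] at h
    simpa [Matrix.mulVec_diagonal] using h
  -- λ_{rev l} = 2 - λ_l
  have hlamrev : ∀ l : Fin N, lam l.rev = 2 - lam l := by
    intro l
    have hpt : ∀ i j : Fin N,
        U i l.rev * M i j * U j l.rev =
          2 * (U i l * Q i j * U j l) - U i l * M i j * U j l := by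
      intro i j
      rw [hUrev l i, hUrev l j, hQ i j]
      by_cases hi : i ∈ S <;> by_cases hj : j ∈ S <;> simp [hi, hj] <;> ring
    have e1 : ∑ j, ∑ i, U i l.rev * M i j * U j l.rev =
        2 * (∑ j, ∑ i, U i l * Q i j * U j l) -
          ∑ j, ∑ i, U i l * M i j * U j l := by
      simp only [hpt, Finset.sum_sub_distrib, ← Finset.mul_sum]
    have h2 := hMsum l.rev l.rev
    have h3 := hQU l l
    have h4 := hMsum l l
    simp only [if_pos rfl, if_true] at h2 h3 h4
    rw [e1, h3, h4] at h2
    linarith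
  -- inner-sum block decomposition
  have hinner : ∀ (k l j : Fin N), ∑ i, U i k * Q i j * U j l =
      if j ∈ S then ∑ i ∈ S, U i k * M i j * U j l
      else ∑ i ∈ Sᶜ, U i k * M i j * U j l := by
    intro k l j
    by_cases hj : j ∈ S
    · rw [if_pos hj, ← Finset.sum_subset (Finset.subset_univ S)
        (fun i _ hi => by rw [hQ]; simp [hi, hj])]
      exact Finset.sum_congr rfl fun i hi => by rw [hQ]; simp [hi, hj]
    · rw [if_neg hj, ← Finset.sum_subset (Finset.subset_univ Sᶜ)
        (fun i _ hi => by rw [hQ]; simp [Finset.mem_compl.not.mp hi, hj])]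
      exact Finset.sum_congr rfl fun i hi => by
        rw [hQ]; simp [Finset.mem_compl.mp hi, hj]
  -- the key scalar identities for low-frequency indices
  have key : ∀ k l : Fin N, lam k < 1 → lam l < 1 →
      (∑ j ∈ S, ∑ i ∈ S, U i k * M i j * U j l)
        = (if k = l then (1:ℝ) else 0) / 2 ∧
      (∑ j ∈ Sᶜ, ∑ i ∈ Sᶜ, U i k * M i j * U j l)
        = (if k = l then (1:ℝ) else 0) / 2 := by
    intro k l hk hl
    have hne : k ≠ l.rev := by
      intro h
      have h5 := hlamrev l
      rw [← h] at h5
      linarith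
    have hsum1 : (∑ j ∈ S, ∑ i ∈ S, U i k * M i j * U j l)
        + (∑ j ∈ Sᶜ, ∑ i ∈ Sᶜ, U i k * M i j * U j l)
        = if k = l then (1:ℝ) else 0 := by
      rw [← hQU k l, ← Finset.sum_add_sum_compl S]
      congr 1
      · exact Finset.sum_congr rfl fun j hj => by rw [hinner k l j, if_pos hj]
      · exact Finset.sum_congr rfl fun j hj => by
          rw [hinner k l j, if_neg (Finset.mem_compl.mp hj)]
    have hsum2 : (∑ j ∈ S, ∑ i ∈ S, U i k * M i j * U j l)
        - (∑ j ∈ Sᶜ, ∑ i ∈ Sᶜ, U i k * M i j * U j l) = 0 := by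
      have h0 := hQU k l.rev
      rw [if_neg hne] at h0
      have hR : ∀ j : Fin N, ∑ i, U i k * Q i j * U j l.rev =
          if j ∈ S then ∑ i ∈ S, U i k * M i j * U j l
          else -∑ i ∈ Sᶜ, U i k * M i j * U j l := by
        intro j
        by_cases hj : j ∈ S
        · rw [if_pos hj]
          have h6 : ∀ i, U i k * Q i j * U j l.rev = U i k * Q i j * U j l := by
            intro i; rw [hUrev l j, if_pos hj, one_mul]
          rw [Finset.sum_congr rfl fun i _ => h6 i, hinner k l j, if_pos hj]
        · rw [if_neg hj]
          have h6 : ∀ i, U i k * Q i j * U j l.rev = -(U i k * Q i j * U j l) := by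
            intro i; rw [hUrev l j, if_neg hj]; ring
          rw [Finset.sum_congr rfl fun i _ => h6 i, Finset.sum_neg_distrib,
            hinner k l j, if_neg hj]
      rw [← h0, ← Finset.sum_add_sum_compl S (fun j => ∑ i, U i k * Q i j * U j l.rev)]
      have e1 : ∑ j ∈ S, ∑ i, U i k * Q i j * U j l.rev
          = ∑ j ∈ S, ∑ i ∈ S, U i k * M i j * U j l :=
        Finset.sum_congr rfl fun j hj => by rw [hR j, if_pos hj]
      have e2 : ∑ j ∈ Sᶜ, ∑ i, U i k * Q i j * U j l.rev
          = -∑ j ∈ Sᶜ, ∑ i ∈ Sᶜ, U i k * M i j * U j l := by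
        rw [← Finset.sum_neg_distrib]
        exact Finset.sum_congr rfl fun j hj => by
          rw [hR j, if_neg (Finset.mem_compl.mp hj)]
      rw [e1, e2]; ring
    constructor <;> linarith
  constructor
  · ext k l
    have hkey := (key k.1 l.1 k.2 l.2).1
    have inner : ∀ x : {i : Fin N // i ∈ S},
        ∑ i : {i : Fin N // i ∈ S}, U i.1 k.1 * M i.1 x.1 * U x.1 l.1
          = ∑ i ∈ S, U i k.1 * M i x.1 * U x.1 l.1 := fun x => by
      rw [← Finset.sum_subtype (p := fun i => i ∈ S) S (fun x => Iff.rfl)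
        (fun i => U i k.1 * M i x.1 * U x.1 l.1)]
    have eL : ((U.submatrix (Subtype.val : {i : Fin N // i ∈ S} → Fin N)
          (Subtype.val : {k : Fin N // lam k < 1} → Fin N))ᵀ *
        M.submatrix (Subtype.val : {i : Fin N // i ∈ S} → Fin N)
          (Subtype.val : {i : Fin N // i ∈ S} → Fin N) *
        U.submatrix (Subtype.val : {i : Fin N // i ∈ S} → Fin N)
          (Subtype.val : {k : Fin N // lam k < 1} → Fin N)) k l
        = ∑ j ∈ S, ∑ i ∈ S, U i k.1 * M i j * U j l.1 := by
      simp only [Matrix.mul_apply, Matrix.submatrix_apply, Matrix.transpose_apply,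
        Finset.sum_mul]
      calc ∑ x : {i : Fin N // i ∈ S}, ∑ i : {i : Fin N // i ∈ S},
              U i.1 k.1 * M i.1 x.1 * U x.1 l.1
          = ∑ x : {i : Fin N // i ∈ S}, ∑ i ∈ S, U i k.1 * M i x.1 * U x.1 l.1 :=
            Finset.sum_congr rfl fun x _ => inner x
        _ = ∑ j ∈ S, ∑ i ∈ S, U i k.1 * M i j * U j l.1 :=
            (Finset.sum_subtype (p := fun i => i ∈ S) S (fun x => Iff.rfl)
              (fun j => ∑ i ∈ S, U i k.1 * M i j * U j l.1)).symm
    rw [eL, hkey]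
    rcases eq_or_ne k l with h | h
    · simp [h, Matrix.one_apply]
    · have h' : (k : Fin N) ≠ (l : Fin N) := fun hv => h (Subtype.ext hv)
      simp [h, h', Matrix.one_apply]
  · ext k l
    have hkey := (key k.1 l.1 k.2 l.2).2
    have inner : ∀ x : {i : Fin N // i ∉ S},
        ∑ i : {i : Fin N // i ∉ S}, U i.1 k.1 * M i.1 x.1 * U x.1 l.1
          = ∑ i ∈ Sᶜ, U i k.1 * M i x.1 * U x.1 l.1 := fun x => by
      rw [← Finset.sum_subtype (p := fun i => i ∉ S) Sᶜ (fun x => Finset.mem_compl)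
        (fun i => U i k.1 * M i x.1 * U x.1 l.1)]
    have eL : ((U.submatrix (Subtype.val : {i : Fin N // i ∉ S} → Fin N)
          (Subtype.val : {k : Fin N // lam k < 1} → Fin N))ᵀ *
        M.submatrix (Subtype.val : {i : Fin N // i ∉ S} → Fin N)
          (Subtype.val : {i : Fin N // i ∉ S} → Fin N) *
        U.submatrix (Subtype.val : {i : Fin N // i ∉ S} → Fin N)
          (Subtype.val : {k : Fin N // lam k < 1} → Fin N)) k l
        = ∑ j ∈ Sᶜ, ∑ i ∈ Sᶜ, U i k.1 * M i j * U j l.1 := by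
      simp only [Matrix.mul_apply, Matrix.submatrix_apply, Matrix.transpose_apply,
        Finset.sum_mul]
      calc ∑ x : {i : Fin N // i ∉ S}, ∑ i : {i : Fin N // i ∉ S},
              U i.1 k.1 * M i.1 x.1 * U x.1 l.1
          = ∑ x : {i : Fin N // i ∉ S}, ∑ i ∈ Sᶜ, U i k.1 * M i x.1 * U x.1 l.1 :=
            Finset.sum_congr rfl fun x _ => inner x
        _ = ∑ j ∈ Sᶜ, ∑ i ∈ Sᶜ, U i k.1 * M i j * U j l.1 :=
            (Finset.sum_subtype (p := fun i => i ∉ S) Sᶜ (fun x => Finset.mem_compl)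
              (fun j => ∑ i ∈ Sᶜ, U i k.1 * M i j * U j l.1)).symm
    rw [eL, hkey]
    rcases eq_or_ne k l with h | h
    · simp [h, Matrix.one_apply]
    · have h' : (k : Fin N) ≠ (l : Fin N) := fun hv => h (Subtype.ext hv)
      simp [h, h', Matrix.one_apply]
end

section
/- Under the spectral-folding setup with |L| = |S|, the matrix U_{SL} is invertible with 2 U_{SL} U_{SL}ᵀ Q_S = I; hence the interpolator x̃ = 2 U_{VL} U_{SL}ᵀ Q_S x_S is sample consistent (x̃_S = x_S) and coincides with the sample-consistent bandlimited interpolation U_{VL} (U_{SL}ᵀ Q_S U_{SL})⁻¹ U_{SL}ᵀ Q_S x_S. -/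
open Matrix

/-- Under the spectral-folding setup with |L| = |S|, U_{SL} is invertible with
2 U_{SL} U_{SL}ᵀ Q_S = I; hence the interpolator x̃ = 2 U_{VL} U_{SL}ᵀ Q_S x_S
is sample consistent and coincides with the sample-consistent bandlimited
interpolation U_{VL} (U_{SL}ᵀ Q_S U_{SL})⁻¹ U_{SL}ᵀ Q_S x_S. -/
theorem sf_interpolator_sample_consistent
    {N : ℕ} (hN : 1 ≤ N)
    (M : Matrix (Fin N) (Fin N) ℝ) (hM : M.PosSemidef)
    (S : Finset (Fin N))
    (J : Matrix (Fin N) (Fin N) ℝ)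
    (hJ : J = Matrix.diagonal (fun i => if i ∈ S then (1 : ℝ) else -1))
    (Q : Matrix (Fin N) (Fin N) ℝ)
    (hQ : ∀ i j, Q i j =
      if (i ∈ S ∧ j ∈ S) ∨ (i ∉ S ∧ j ∉ S) then M i j else 0)
    (hQpd : Q.PosDef)
    (lam : Fin N → ℝ) (hlam : Monotone lam)
    (U : Matrix (Fin N) (Fin N) ℝ)
    (hUQU : Uᵀ * Q * U = 1)
    (hMU : M * U = Q * U * Matrix.diagonal lam)
    (hfold : ∀ k : Fin N, (fun i => U i k.rev) = J.mulVec (fun i => U i k))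
    (hcard : Fintype.card {k : Fin N // lam k < 1} =
      Fintype.card {i : Fin N // i ∈ S})
    (QS : Matrix {i : Fin N // i ∈ S} {i : Fin N // i ∈ S} ℝ)
    (hQS : QS = M.submatrix Subtype.val Subtype.val)
    (UVL : Matrix (Fin N) {k : Fin N // lam k < 1} ℝ)
    (hUVL : UVL = U.submatrix id Subtype.val)
    (USL : Matrix {i : Fin N // i ∈ S} {k : Fin N // lam k < 1} ℝ)
    (hUSL : USL = U.submatrix Subtype.val Subtype.val) :
    ((2 : ℝ) • (USL * (USLᵀ * QS)) = 1) ∧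
    (∃ V : Matrix {k : Fin N // lam k < 1} {i : Fin N // i ∈ S} ℝ,
      USL * V = 1 ∧ V * USL = 1) ∧
    (∀ x : Fin N → ℝ, ∀ i : {i : Fin N // i ∈ S},
      ((2 : ℝ) • (UVL * (USLᵀ * QS))).mulVec (fun j : {i : Fin N // i ∈ S} => x j.val)
        i.val = x i.val) ∧
    (∀ x : Fin N → ℝ,
      ((2 : ℝ) • (UVL * (USLᵀ * QS))).mulVec (fun j : {i : Fin N // i ∈ S} => x j.val) =
        (UVL * (USLᵀ * QS * USL)⁻¹ * (USLᵀ * QS)).mulVec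
          (fun j : {i : Fin N // i ∈ S} => x j.val)) := by
  classical
  set ε : Fin N → ℝ := fun i => if i ∈ S then (1 : ℝ) else -1 with hε
  have hεne : ∀ i, ε i ≠ 0 := by
    intro i
    by_cases hi : i ∈ S <;> simp [hε, hi]
  -- entrywise fold relation
  have hfold' : ∀ (k i : Fin N), U i k.rev = ε i * U i k := by
    intro k i
    have h := congrFun (hfold k) i
    rw [hJ] at h
    rw [Matrix.mulVec_diagonal] at h
    exact h
  -- entrywise eigen relation
  have hM' : ∀ (i k : Fin N), (∑ j, M i j * U j k) = (∑ j, Q i j * U j k) * lam k := by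
    intro i k
    have h : (M * U) i k = (Q * U) i k * lam k := by rw [hMU, Matrix.mul_diagonal]
    simpa [Matrix.mul_apply] using h
  -- orthogonality entrywise
  have hO : ∀ k l : Fin N,
      (∑ i, U i k * (∑ j, Q i j * U j l)) = if k = l then 1 else 0 := by
    intro k l
    have h : (Uᵀ * (Q * U)) k l = (1 : Matrix (Fin N) (Fin N) ℝ) k l := by
      rw [← Matrix.mul_assoc, hUQU]
    simpa [Matrix.mul_apply, Matrix.one_apply] using h
  -- elementwise sign relations
  have hQε : ∀ i j, Q i j * ε j = ε i * Q i j := by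
    intro i j
    by_cases hi : i ∈ S <;> by_cases hj : j ∈ S <;>
      simp [hQ, hε, hi, hj] <;> ring
  have hMε : ∀ i j, M i j * ε j = ε i * (2 * Q i j - M i j) := by
    intro i j
    by_cases hi : i ∈ S <;> by_cases hj : j ∈ S <;>
      simp [hQ, hε, hi, hj] <;> ring
  have hQrev : ∀ (k i : Fin N),
      (∑ j, Q i j * U j k.rev) = ε i * ∑ j, Q i j * U j k := by
    intro k i
    rw [Finset.mul_sum]
    refine Finset.sum_congr rfl fun j _ => ?_
    rw [hfold' k j, ← mul_assoc, hQε]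
    ring
  -- eigenvalue folding
  have lamrev : ∀ k : Fin N, lam k + lam k.rev = 2 := by
    intro k
    have hA : ∃ i, (∑ j, Q i j * U j k) ≠ 0 := by
      by_contra h
      push_neg at h
      have h1 := hO k k
      simp [h] at h1
    obtain ⟨i, hAi⟩ := hA
    have e1 : (∑ j, M i j * U j k.rev) = (ε i * (∑ j, Q i j * U j k)) * lam k.rev := by
      rw [hM' i k.rev, hQrev]
    have e2 : (∑ j, M i j * U j k.rev)
        = ε i * (2 * (∑ j, Q i j * U j k) - (∑ j, Q i j * U j k) * lam k) := by
      have hterm : ∀ j, M i j * U j k.rev = ε i * (2 * (Q i j * U j k) - M i j * U j k) := by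
        intro j
        rw [hfold' k j, ← mul_assoc, hMε]
        ring
      rw [Finset.sum_congr rfl fun j _ => hterm j, ← Finset.mul_sum,
        Finset.sum_sub_distrib, ← Finset.mul_sum, hM' i k]
    have e3 : ε i * ((∑ j, Q i j * U j k) * (lam k.rev + lam k - 2)) = 0 := by
      linear_combination e1.symm.trans e2
    rcases mul_eq_zero.mp e3 with h | h
    · exact absurd h (hεne i)
    · rcases mul_eq_zero.mp h with h' | h'
      · exact absurd h' hAi
      · linarith
  -- Q restricted sum for rows in S
  have hQS' : ∀ i ∈ S, ∀ l : Fin N,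
      (∑ j, Q i j * U j l) = ∑ j ∈ S, M i j * U j l := by
    intro i hi l
    have hterm : ∀ j, Q i j * U j l = if j ∈ S then M i j * U j l else 0 := by
      intro j
      by_cases hj : j ∈ S <;> simp [hQ, hi, hj]
    rw [Finset.sum_congr rfl fun j _ => hterm j, Finset.sum_ite_mem, Finset.univ_inter]
  -- the core identity
  have hcore : ∀ k l : Fin N, lam k < 1 → lam l < 1 →
      (2 : ℝ) * ∑ i ∈ S, U i k * (∑ j ∈ S, M i j * U j l) = if k = l then 1 else 0 := by
    intro k l hk hl
    have hrevne : k.rev ≠ l := by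
      intro h
      have h2 := lamrev k
      rw [h] at h2
      linarith
    have t1 := hO k l
    have t2 := hO k.rev l
    rw [if_neg hrevne] at t2
    have t3 : ∑ i, (U i k * (∑ j, Q i j * U j l) + U i k.rev * (∑ j, Q i j * U j l))
        = if k = l then 1 else 0 := by
      rw [Finset.sum_add_distrib, t1, t2, add_zero]
    have t4 : ∀ i, U i k * (∑ j, Q i j * U j l) + U i k.rev * (∑ j, Q i j * U j l)
        = if i ∈ S then 2 * (U i k * (∑ j, Q i j * U j l)) else 0 := by
      intro i
      rw [hfold' k i]
      by_cases hi : i ∈ S <;> simp [hε, hi] <;> try ring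
    rw [Finset.sum_congr rfl fun i _ => t4 i, Finset.sum_ite_mem, Finset.univ_inter] at t3
    rw [← t3, Finset.mul_sum]
    refine Finset.sum_congr rfl fun i hi => ?_
    rw [hQS' i hi l]
  -- sums over the subtype of S
  have hsub : ∀ f : Fin N → ℝ,
      (∑ i : {i : Fin N // i ∈ S}, f i.1) = ∑ i ∈ S, f i :=
    fun f => (Finset.sum_subtype S (fun x => Iff.rfl) f).symm
  -- matrix form of the core identity
  have h1 : (2 : ℝ) • (USLᵀ * (QS * USL))
      = (1 : Matrix {k : Fin N // lam k < 1} {k : Fin N // lam k < 1} ℝ) := by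
    ext k l
    have hc := hcore k.1 l.1 k.2 l.2
    have e1 : (USLᵀ * (QS * USL)) k l
        = ∑ i ∈ S, U i k.1 * (∑ j ∈ S, M i j * U j l.1) := by
      simp only [Matrix.mul_apply, Matrix.transpose_apply, hQS, hUSL,
        Matrix.submatrix_apply]
      rw [← hsub (fun i => U i k.1 * (∑ j ∈ S, M i j * U j l.1))]
      refine Finset.sum_congr rfl fun i _ => ?_
      rw [← hsub (fun j => M i.1 j * U j l.1)]
    rw [Matrix.smul_apply, e1, smul_eq_mul, hc, Matrix.one_apply]
    by_cases h : k = l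
    · rw [if_pos (by rw [h]), if_pos h]
    · rw [if_neg (fun hh => h (Subtype.ext hh)), if_neg h]
  have h1' : ((2 : ℝ) • (USLᵀ * QS)) * USL = 1 := by
    rw [Matrix.smul_mul, Matrix.mul_assoc]
    exact h1
  have h2 : USL * ((2 : ℝ) • (USLᵀ * QS)) = 1 :=
    (Matrix.mul_eq_one_comm_of_equiv (Fintype.equivOfCardEq hcard).symm).mpr h1'
  have part1 : (2 : ℝ) • (USL * (USLᵀ * QS)) = 1 := by
    rw [← Matrix.mul_smul]
    exact h2
  -- row identification
  have part3 : ∀ x : Fin N → ℝ, ∀ i : {i : Fin N // i ∈ S},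
      ((2 : ℝ) • (UVL * (USLᵀ * QS))).mulVec (fun j : {i : Fin N // i ∈ S} => x j.val)
        i.val = x i.val := by
    intro x i
    have hrow : ∀ j : {i : Fin N // i ∈ S},
        ((2 : ℝ) • (UVL * (USLᵀ * QS))) i.val j
          = ((2 : ℝ) • (USL * (USLᵀ * QS))) i j := by
      intro j
      simp only [Matrix.smul_apply, Matrix.mul_apply, hUVL, hUSL,
        Matrix.submatrix_apply, id]
    have hmv : ((2 : ℝ) • (UVL * (USLᵀ * QS))).mulVec
          (fun j : {i : Fin N // i ∈ S} => x j.val) i.val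
        = ((2 : ℝ) • (USL * (USLᵀ * QS))).mulVec
          (fun j : {i : Fin N // i ∈ S} => x j.val) i := by
      simp only [Matrix.mulVec, dotProduct]
      exact Finset.sum_congr rfl fun j _ => by rw [hrow j]
    rw [hmv, part1, Matrix.one_mulVec]
  refine ⟨part1, ⟨(2 : ℝ) • (USLᵀ * QS), h2, h1'⟩, part3, ?_⟩
  -- the inverse form
  have hK : (USLᵀ * QS * USL)⁻¹
      = (2 : ℝ) • (1 : Matrix {k : Fin N // lam k < 1} {k : Fin N // lam k < 1} ℝ) := by
    apply Matrix.inv_eq_right_inv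
    rw [Matrix.mul_smul, Matrix.mul_one, Matrix.mul_assoc]
    exact h1
  have hmat : UVL * (USLᵀ * QS * USL)⁻¹ * (USLᵀ * QS)
      = (2 : ℝ) • (UVL * (USLᵀ * QS)) := by
    rw [hK, Matrix.mul_smul, Matrix.mul_one, Matrix.smul_mul]
  intro x
  rw [hmat]
end

section
/- (Theorem 1) Under the spectral-folding setup with |L| = |H| = |S|, let x ∈ ℝᴺ and let x̂ = UᵀQx with low-, middle-, and high-frequency components x̂_L (entries of x̂ indexed by L), Δx̂_m (entries indexed by Mid), and Δx̂_h (entries indexed by H). If x̃ = 2 U_{VL} U_{SL}ᵀ Q_S x_S is the spectral-folding bandlimited interpolation of x from its samples x_S, then the reconstruction error in the Q-norm is ‖x̃ − x‖²_Q = 2‖Δx̂_h‖²₂ + ‖Δx̂_m‖²₂; in particular it depends only on the middle- and high-frequency content of x. -/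
open Matrix

/-- Theorem 1: the Q-norm reconstruction error of the spectral-folding
bandlimited interpolation x̃ = 2 U_{VL} U_{SL}ᵀ Q_S x_S satisfies
‖x̃ − x‖²_Q = 2‖Δx̂_h‖²₂ + ‖Δx̂_m‖²₂, where Δx̂_h and Δx̂_m are the high- and
middle-frequency GFT coefficients of x. -/
theorem sf_reconstruction_error
    {N : ℕ} (hN : 1 ≤ N)
    (M : Matrix (Fin N) (Fin N) ℝ) (hM : M.PosSemidef)
    (S : Finset (Fin N))
    (J : Matrix (Fin N) (Fin N) ℝ)
    (hJ : J = Matrix.diagonal (fun i => if i ∈ S then (1 : ℝ) else -1))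
    (Q : Matrix (Fin N) (Fin N) ℝ)
    (hQ : ∀ i j, Q i j =
      if (i ∈ S ∧ j ∈ S) ∨ (i ∉ S ∧ j ∉ S) then M i j else 0)
    (hQpd : Q.PosDef)
    (lam : Fin N → ℝ) (hlam : Monotone lam)
    (U : Matrix (Fin N) (Fin N) ℝ)
    (hUQU : Uᵀ * Q * U = 1)
    (hMU : M * U = Q * U * Matrix.diagonal lam)
    (hfold : ∀ k : Fin N, (fun i => U i k.rev) = J.mulVec (fun i => U i k))
    (hcardL : Fintype.card {k : Fin N // lam k < 1} =
      Fintype.card {i : Fin N // i ∈ S})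
    (hcardH : Fintype.card {k : Fin N // 1 < lam k} =
      Fintype.card {i : Fin N // i ∈ S})
    (QS : Matrix {i : Fin N // i ∈ S} {i : Fin N // i ∈ S} ℝ)
    (hQS : QS = M.submatrix Subtype.val Subtype.val)
    (UVL : Matrix (Fin N) {k : Fin N // lam k < 1} ℝ)
    (hUVL : UVL = U.submatrix id Subtype.val)
    (USL : Matrix {i : Fin N // i ∈ S} {k : Fin N // lam k < 1} ℝ)
    (hUSL : USL = U.submatrix Subtype.val Subtype.val)
    (x : Fin N → ℝ) (xt : Fin N → ℝ)
    (hxt : xt = ((2 : ℝ) • (UVL * (USLᵀ * QS))).mulVec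
      (fun j : {i : Fin N // i ∈ S} => x j.val)) :
    (xt - x) ⬝ᵥ Q.mulVec (xt - x) =
      2 * (∑ k ∈ Finset.univ.filter (fun k : Fin N => 1 < lam k),
            ((Uᵀ * Q).mulVec x k) ^ 2) +
        ∑ k ∈ Finset.univ.filter (fun k : Fin N => lam k = 1),
          ((Uᵀ * Q).mulVec x k) ^ 2 := by
  classical
  have hMS : ∀ i j, M j i = M i j := by
    intro i j
    have := congrFun (congrFun hM.1 i) j
    simpa [Matrix.conjTranspose, Matrix.transpose_apply] using this
  -- Q is symmetric
  have hQsym : Qᵀ = Q := by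
    ext i j
    rw [Matrix.transpose_apply, hQ, hQ]
    by_cases hi : i ∈ S <;> by_cases hj : j ∈ S <;> simp [hi, hj, hMS]
  -- J commutes with Q
  have hQJ : Q * J = J * Q := by
    ext i j
    rw [hJ, Matrix.mul_diagonal, Matrix.diagonal_mul, hQ]
    by_cases hi : i ∈ S <;> by_cases hj : j ∈ S <;> simp [hi, hj]
  -- conjugation of M by J
  have hMJ : M * J = J * ((2 : ℝ) • Q - M) := by
    ext i j
    rw [hJ, Matrix.mul_diagonal, Matrix.diagonal_mul, Matrix.sub_apply,
      Matrix.smul_apply, hQ]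
    by_cases hi : i ∈ S <;> by_cases hj : j ∈ S <;>
      simp [hi, hj] <;> ring
  -- columns of U are generalized eigenvectors
  have hcol : ∀ k : Fin N,
      M.mulVec (fun i => U i k) = lam k • Q.mulVec (fun i => U i k) := by
    intro k
    funext i
    have h := congrFun (congrFun hMU i) k
    rw [Matrix.mul_apply, Matrix.mul_diagonal, Matrix.mul_apply] at h
    simp only [Matrix.mulVec, dotProduct, Pi.smul_apply, smul_eq_mul]
    rw [h]; ring
  -- entries of UᵀQU as Q-inner products of columns
  have hent : ∀ a b : Fin N,
      (fun i => U i a) ⬝ᵥ Q.mulVec (fun i => U i b) = (Uᵀ * Q * U) a b := by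
    intro a b
    simp only [dotProduct, Matrix.mulVec, Matrix.mul_apply,
      Matrix.transpose_apply, Finset.mul_sum, Finset.sum_mul, mul_assoc]
    exact Finset.sum_comm
  -- spectral folding of eigenvalues
  have hrev : ∀ k : Fin N, lam k.rev = 2 - lam k := by
    intro k
    set u : Fin N → ℝ := fun i => U i k with hu
    set v : Fin N → ℝ := fun i => U i k.rev with hvdef
    have hv : v = J.mulVec u := hfold k
    have e1 : M.mulVec v = lam k.rev • Q.mulVec v := hcol k.rev
    have e2 : M.mulVec v = (2 - lam k) • Q.mulVec v := by
      calc M.mulVec v = M.mulVec (J.mulVec u) := by rw [hv]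
        _ = (M * J).mulVec u := Matrix.mulVec_mulVec u M J
        _ = (J * ((2 : ℝ) • Q - M)).mulVec u := by rw [hMJ]
        _ = J.mulVec (((2 : ℝ) • Q - M).mulVec u) :=
            (Matrix.mulVec_mulVec u J _).symm
        _ = J.mulVec ((2 : ℝ) • Q.mulVec u - lam k • Q.mulVec u) := by
            rw [Matrix.sub_mulVec, Matrix.smul_mulVec, hcol k]
        _ = J.mulVec ((2 - lam k) • Q.mulVec u) := by
            rw [sub_smul]
        _ = (2 - lam k) • J.mulVec (Q.mulVec u) := Matrix.mulVec_smul J _ _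
        _ = (2 - lam k) • (J * Q).mulVec u := by rw [Matrix.mulVec_mulVec]
        _ = (2 - lam k) • (Q * J).mulVec u := by rw [hQJ]
        _ = (2 - lam k) • Q.mulVec (J.mulVec u) := by rw [Matrix.mulVec_mulVec]
        _ = (2 - lam k) • Q.mulVec v := by rw [← hv]
    have hvv : v ⬝ᵥ Q.mulVec v = 1 := by
      rw [hent, hUQU, Matrix.one_apply_eq]
    have hQv : Q.mulVec v ≠ 0 := by
      intro h
      rw [h] at hvv
      simp at hvv
    have h0 : (lam k.rev - (2 - lam k)) • Q.mulVec v = 0 := by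
      rw [sub_smul, ← e1, ← e2, sub_self]
    rcases smul_eq_zero.mp h0 with h | h
    · linarith [sub_eq_zero.mp h]
    · exact absurd h hQv
  -- U has a right inverse
  have hUright : U * (Uᵀ * Q) = 1 := by
    rw [mul_eq_one_comm]
    exact hUQU
  set xh : Fin N → ℝ := (Uᵀ * Q).mulVec x with hxh
  set yh : Fin N → ℝ := (Uᵀ * Q).mulVec xt with hyh
  have hx : U.mulVec xh = x := by
    rw [hxh, Matrix.mulVec_mulVec, hUright, Matrix.one_mulVec]
  have hxtU : U.mulVec yh = xt := by
    rw [hyh, Matrix.mulVec_mulVec, hUright, Matrix.one_mulVec]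
  -- the Q-quadratic form is the euclidean form in GFT coordinates
  have hquad : ∀ w : Fin N → ℝ,
      (U.mulVec w) ⬝ᵥ Q.mulVec (U.mulVec w) = w ⬝ᵥ w := by
    intro w
    have h1 : U.mulVec w = Matrix.vecMul w Uᵀ :=
      (Matrix.vecMul_transpose U w).symm
    rw [Matrix.mulVec_mulVec, Matrix.dotProduct_mulVec, h1,
      Matrix.vecMul_vecMul, ← Matrix.mul_assoc, hUQU, Matrix.vecMul_one]
  -- formula for column k.rev of U
  have hUrev : ∀ (k i : Fin N),
      U i k.rev = (if i ∈ S then (1 : ℝ) else -1) * U i k := by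
    intro k i
    have := congrFun (hfold k) i
    rwa [hJ, Matrix.mulVec_diagonal] at this
  -- the GFT of xt
  set xS : {i : Fin N // i ∈ S} → ℝ := fun j => x j.val with hxS
  set g : {k : Fin N // lam k < 1} → ℝ := (USLᵀ * QS).mulVec xS with hg
  have hP : ∀ (k : Fin N) (l : {k : Fin N // lam k < 1}),
      ((Uᵀ * Q) * UVL) k l = if k = (l : Fin N) then 1 else 0 := by
    intro k l
    have h1 : ((Uᵀ * Q) * UVL) k l = (Uᵀ * Q * U) k (l : Fin N) := by
      rw [hUVL]
      simp [Matrix.mul_apply, Matrix.submatrix_apply]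
    rw [h1, hUQU, Matrix.one_apply]
  have hyval : ∀ k : Fin N,
      yh k = if h : lam k < 1 then 2 * g ⟨k, h⟩ else 0 := by
    intro k
    have hyh2 : yh = (2 : ℝ) • ((Uᵀ * Q) * UVL).mulVec g := by
      rw [hyh, hxt, Matrix.smul_mulVec, Matrix.mulVec_smul]
      rw [hg, Matrix.mulVec_mulVec, Matrix.mulVec_mulVec]
      simp only [Matrix.mul_assoc]
    rw [hyh2]
    simp only [Pi.smul_apply, smul_eq_mul, Matrix.mulVec, dotProduct]
    by_cases h : lam k < 1
    · rw [dif_pos h]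
      congr 1
      have : ∀ l : {k : Fin N // lam k < 1},
          ((Uᵀ * Q) * UVL) k l * g l
            = if (⟨k, h⟩ : {k : Fin N // lam k < 1}) = l then g l else 0 := by
        intro l
        rw [hP]
        by_cases hkl : k = (l : Fin N)
        · have : (⟨k, h⟩ : {k : Fin N // lam k < 1}) = l := Subtype.ext hkl
          simp [hkl, this]
        · have : ¬ (⟨k, h⟩ : {k : Fin N // lam k < 1}) = l := by
            intro hc; exact hkl (congrArg Subtype.val hc)
          simp [hkl, this]
      rw [Finset.sum_congr rfl (fun l _ => this l)]
      exact Fintype.sum_ite_eq _ g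
    · rw [dif_neg h]
      have : ∀ l : {k : Fin N // lam k < 1},
          ((Uᵀ * Q) * UVL) k l * g l = 0 := by
        intro l
        rw [hP]
        have : ¬ k = (l : Fin N) := by
          intro hc; exact h (hc ▸ l.2)
        simp [this]
      rw [Finset.sum_congr rfl (fun l _ => this l)]
      simp
  -- the key sampling identity: 2 g ⟨k⟩ = x̂ k + x̂ k.rev for low frequencies
  have hkey : ∀ (k : Fin N) (h : lam k < 1),
      2 * g ⟨k, h⟩ = xh k + xh k.rev := by
    intro k h
    -- rewrite g as a double sum over S
    have hgval : g ⟨k, h⟩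
        = ∑ i ∈ S, ∑ j ∈ S, U j k * M j i * x i := by
      rw [hg, hUSL, hQS]
      simp only [Matrix.mulVec, dotProduct, Matrix.mul_apply,
        Matrix.transpose_apply, Matrix.submatrix_apply, Finset.sum_mul]
      rw [← Finset.sum_coe_sort S (fun i => ∑ j ∈ S, U j k * M j i * x i)]
      refine Finset.sum_congr rfl fun i _ => ?_
      rw [← Finset.sum_coe_sort S (fun j => U j k * M j i.val * x i.val)]
    -- rewrite x̂ k + x̂ k.rev as a double sum over S
    have hxhk : ∀ a : Fin N, xh a = ∑ i, U i a * (Q.mulVec x) i := by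
      intro a
      rw [hxh, ← Matrix.mulVec_mulVec]
      simp [Matrix.mulVec, dotProduct, Matrix.transpose_apply]
    have hQx : ∀ i, i ∈ S → (Q.mulVec x) i = ∑ j ∈ S, M i j * x j := by
      intro i hi
      simp only [Matrix.mulVec, dotProduct]
      rw [← Finset.sum_filter_add_sum_filter_not Finset.univ (· ∈ S)]
      have h2 : ∑ j ∈ Finset.univ.filter (fun j => ¬ j ∈ S),
          Q i j * x j = 0 := by
        refine Finset.sum_eq_zero fun j hj => ?_
        rw [Finset.mem_filter] at hj
        rw [hQ]
        simp [hi, hj.2]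
      rw [h2, add_zero, Finset.filter_univ_mem]
      refine Finset.sum_congr rfl fun j hj => ?_
      rw [hQ]
      simp [hi, hj]
    calc 2 * g ⟨k, h⟩
        = ∑ j ∈ S, ∑ i ∈ S, 2 * (U j k * (M j i * x i)) := by
          rw [hgval, Finset.mul_sum, Finset.sum_comm]
          refine Finset.sum_congr rfl fun j _ => ?_
          rw [Finset.mul_sum]
          refine Finset.sum_congr rfl fun i _ => by ring
      _ = ∑ j ∈ S, 2 * (U j k * (Q.mulVec x) j) := by
          refine Finset.sum_congr rfl fun j hj => ?_
          rw [hQx j hj, Finset.mul_sum, Finset.mul_sum]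
      _ = ∑ i, (if i ∈ S then 2 * (U i k * (Q.mulVec x) i) else 0) := by
          conv_lhs => rw [← Finset.filter_univ_mem S]
          rw [Finset.sum_filter]
      _ = xh k + xh k.rev := by
          rw [hxhk k, hxhk k.rev, ← Finset.sum_add_distrib]
          refine Finset.sum_congr rfl fun i _ => ?_
          rw [hUrev k i]
          by_cases hi : i ∈ S <;> simp [hi] <;> ring
  -- the GFT coefficients of the error
  have hdiff : ∀ k : Fin N,
      yh k - xh k = if lam k < 1 then xh k.rev else - xh k := by
    intro k
    rw [hyval k]
    by_cases h : lam k < 1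
    · rw [dif_pos h, if_pos h, hkey k h]; ring
    · rw [dif_neg h, if_neg h]; ring
  -- Parseval for the error
  have hfinal : (xt - x) ⬝ᵥ Q.mulVec (xt - x) = ∑ k, (yh k - xh k) ^ 2 := by
    have hsub : xt - x = U.mulVec (yh - xh) := by
      rw [Matrix.mulVec_sub, hx, hxtU]
    rw [hsub, hquad]
    simp [dotProduct, sq]
  rw [hfinal]
  have hsq : ∀ k : Fin N,
      (yh k - xh k) ^ 2 = if lam k < 1 then (xh k.rev) ^ 2 else (xh k) ^ 2 := by
    intro k
    rw [hdiff k]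
    by_cases h : lam k < 1 <;> simp [h, neg_sq]
  rw [Finset.sum_congr rfl (fun k _ => hsq k), Finset.sum_ite]
  have hA : ∑ k ∈ Finset.univ.filter (fun k : Fin N => lam k < 1), (xh k.rev) ^ 2
      = ∑ k ∈ Finset.univ.filter (fun k : Fin N => 1 < lam k), (xh k) ^ 2 := by
    refine Finset.sum_nbij' (fun k => k.rev) (fun k => k.rev) ?_ ?_ ?_ ?_ ?_
    · intro a ha
      simp only [Finset.mem_filter, Finset.mem_univ, true_and] at ha ⊢
      rw [hrev a]; linarith
    · intro a ha
      simp only [Finset.mem_filter, Finset.mem_univ, true_and] at ha ⊢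
      rw [hrev a]; linarith
    · intro a _; exact Fin.rev_rev a
    · intro a _; exact Fin.rev_rev a
    · intro a _; rfl
  have hB : Finset.univ.filter (fun k : Fin N => ¬ lam k < 1)
      = Finset.univ.filter (fun k : Fin N => lam k = 1)
        ∪ Finset.univ.filter (fun k : Fin N => 1 < lam k) := by
    ext k
    simp only [Finset.mem_filter, Finset.mem_union, Finset.mem_univ, true_and,
      not_lt]
    constructor
    · intro h
      rcases h.lt_or_eq with h' | h'
      · exact Or.inr h'
      · exact Or.inl h'.symm
    · rintro (h | h)
      · exact le_of_eq h.symm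
      · exact le_of_lt h
  have hdisj : Disjoint (Finset.univ.filter (fun k : Fin N => lam k = 1))
      (Finset.univ.filter (fun k : Fin N => 1 < lam k)) := by
    rw [Finset.disjoint_left]
    intro a h1 h2
    simp only [Finset.mem_filter, Finset.mem_univ, true_and] at h1 h2
    rw [h1] at h2
    exact lt_irrefl 1 h2
  rw [hA, hB, Finset.sum_union hdisj]
  ring
end

section
/- (Key identity for Theorem 3) Under the spectral-folding setup with folding pairing u_{N+1−k} = J u_k and |L| = |S|, one has −(Q_S)⁻¹ M_{SSᶜ} = 2 U_{SL} (I − Λ_L) U_{SᶜL}ᵀ Q_{Sᶜ}, where Λ_L = diag(λ_k)_{k∈L}; i.e., the full-spectrum expansion U_S(I−Λ)U_{Sᶜ}ᵀQ_{Sᶜ} collapses to twice its low-frequency part. -/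
open Matrix Finset

private lemma sum_subtype_eq {α : Type*} [Fintype α] (p : α → Prop) [DecidablePred p]
    {F : Fintype (Subtype p)} (g : α → ℝ) (hg : ∀ i, ¬ p i → g i = 0) :
    ∑ i, g i = ∑ i : Subtype p, g i := by
  rw [← Finset.sum_subtype (Finset.univ.filter p) (fun x => by simp) g]
  exact (Finset.sum_filter_of_ne (fun x _ hx => by
    by_contra h; exact hx (hg x h))).symm

/-- Key identity for Theorem 3: under the spectral-folding setup with folding
pairing u_{N+1−k} = J u_k and |L| = |S|, one has
−(Q_S)⁻¹ M_{SSᶜ} = 2 U_{SL} (I − Λ_L) U_{SᶜL}ᵀ Q_{Sᶜ}. -/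
theorem low_freq_collapse_identity
    {N : ℕ} (hN : 1 ≤ N)
    (M : Matrix (Fin N) (Fin N) ℝ) (hM : M.PosSemidef)
    (S : Finset (Fin N))
    (J : Matrix (Fin N) (Fin N) ℝ)
    (hJ : J = Matrix.diagonal (fun i => if i ∈ S then (1 : ℝ) else -1))
    (Q : Matrix (Fin N) (Fin N) ℝ)
    (hQ : ∀ i j, Q i j =
      if (i ∈ S ∧ j ∈ S) ∨ (i ∉ S ∧ j ∉ S) then M i j else 0)
    (hQpd : Q.PosDef)
    (lam : Fin N → ℝ) (hlam : Monotone lam)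
    (U : Matrix (Fin N) (Fin N) ℝ)
    (hUQU : Uᵀ * Q * U = 1)
    (hMU : M * U = Q * U * Matrix.diagonal lam)
    (hfold : ∀ k : Fin N, (fun i => U i k.rev) = J.mulVec (fun i => U i k))
    (hcard : Fintype.card {k : Fin N // lam k < 1} =
      Fintype.card {i : Fin N // i ∈ S})
    (QS : Matrix {i : Fin N // i ∈ S} {i : Fin N // i ∈ S} ℝ)
    (hQS : QS = M.submatrix Subtype.val Subtype.val)
    (QSc : Matrix {i : Fin N // i ∉ S} {i : Fin N // i ∉ S} ℝ)
    (hQSc : QSc = M.submatrix Subtype.val Subtype.val)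
    (USL : Matrix {i : Fin N // i ∈ S} {k : Fin N // lam k < 1} ℝ)
    (hUSL : USL = U.submatrix Subtype.val Subtype.val)
    (UScL : Matrix {i : Fin N // i ∉ S} {k : Fin N // lam k < 1} ℝ)
    (hUScL : UScL = U.submatrix Subtype.val Subtype.val) :
    -(QS⁻¹ * M.submatrix (Subtype.val : {i : Fin N // i ∈ S} → Fin N)
        (Subtype.val : {i : Fin N // i ∉ S} → Fin N)) =
      (2 : ℝ) • (USL *
        ((1 : Matrix {k : Fin N // lam k < 1} {k : Fin N // lam k < 1} ℝ) -
          Matrix.diagonal (fun k : {k : Fin N // lam k < 1} => lam k.val)) *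
        UScLᵀ * QSc) := by
  classical
  set d : Fin N → ℝ := fun k => 1 - lam k with hd
  set X : Matrix (Fin N) (Fin N) ℝ := U * Matrix.diagonal d * Uᵀ with hX
  -- folding at the entry level
  have hUfold : ∀ k i : Fin N, U i k.rev = (if i ∈ S then (1:ℝ) else -1) * U i k := by
    intro k i
    have h := congrFun (hfold k) i
    simpa [hJ, Matrix.mulVec_diagonal] using h
  have hQzero : ∀ i j : Fin N, ((i ∈ S ∧ j ∉ S) ∨ (i ∉ S ∧ j ∈ S)) → Q i j = 0 := by
    intro i j h
    rw [hQ]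
    rcases h with ⟨h1, h2⟩ | ⟨h1, h2⟩ <;> simp [h1, h2]
  -- eigen-equations, entrywise
  have eig : ∀ k i : Fin N, ∑ j, M i j * U j k = (∑ j, Q i j * U j k) * lam k := by
    intro k i
    have h : (M * U) i k = (Q * U * Matrix.diagonal lam) i k := by rw [hMU]
    rw [Matrix.mul_diagonal] at h
    rw [Matrix.mul_apply] at h
    rw [Matrix.mul_apply] at h
    exact h
  -- the Q-gradient of each eigenvector is nonzero
  have hQv : ∀ k : Fin N, ¬ (∀ i, (∑ j, Q i j * U j k) = 0) := by
    intro k hz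
    have h1 : (Uᵀ * Q * U) k k = 1 := by rw [hUQU]; simp [Matrix.one_apply]
    rw [Matrix.mul_assoc, Matrix.mul_apply] at h1
    simp only [Matrix.transpose_apply, Matrix.mul_apply] at h1
    have h0 : ∑ i, U i k * ∑ j, Q i j * U j k = 0 :=
      Finset.sum_eq_zero (fun i _ => by rw [hz i, mul_zero])
    rw [h0] at h1
    exact zero_ne_one h1
  -- the reflected eigenvalue
  have lamrev : ∀ k : Fin N, lam k.rev = 2 - lam k := by
    intro k
    by_contra hne
    refine hQv k (fun i => ?_)
    set ε : Fin N → ℝ := fun i => if i ∈ S then (1:ℝ) else -1 with hε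
    have hεne : ∀ i, ε i ≠ 0 := by
      intro i; by_cases h : i ∈ S <;> simp [hε, h]
    have h := eig k.rev i
    have hM' : ∑ j, M i j * U j k.rev
        = ε i * ((2 - lam k) * (∑ j, Q i j * U j k)) := by
      have e1 : ∑ j, M i j * U j k.rev
          = ∑ j, ε i * ((2 * Q i j - M i j) * U j k) := by
        refine Finset.sum_congr rfl fun j _ => ?_
        rw [hUfold k j]
        simp only [hε]
        by_cases h1 : i ∈ S <;> by_cases h2 : j ∈ S
        · have hqv : Q i j = M i j := by rw [hQ]; exact if_pos (Or.inl ⟨h1, h2⟩)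
          rw [hqv, if_pos h1, if_pos h2]; ring
        · have hqv : Q i j = 0 := hQzero i j (Or.inl ⟨h1, h2⟩)
          rw [hqv, if_pos h1, if_neg h2]; ring
        · have hqv : Q i j = 0 := hQzero i j (Or.inr ⟨h1, h2⟩)
          rw [hqv, if_neg h1, if_pos h2]; ring
        · have hqv : Q i j = M i j := by rw [hQ]; exact if_pos (Or.inr ⟨h1, h2⟩)
          rw [hqv, if_neg h1, if_neg h2]; ring
      rw [e1, ← Finset.mul_sum]
      congr 1
      have e2 : ∑ j, (2 * Q i j - M i j) * U j k
          = 2 * (∑ j, Q i j * U j k) - ∑ j, M i j * U j k := by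
        rw [Finset.mul_sum, ← Finset.sum_sub_distrib]
        exact Finset.sum_congr rfl fun j _ => by ring
      rw [e2, eig k i]; ring
    have hQ' : ∑ j, Q i j * U j k.rev = ε i * ∑ j, Q i j * U j k := by
      rw [Finset.mul_sum]
      refine Finset.sum_congr rfl fun j _ => ?_
      rw [hUfold k j]
      simp only [hε]
      by_cases h1 : i ∈ S <;> by_cases h2 : j ∈ S
      · rw [if_pos h1, if_pos h2]; ring
      · rw [hQzero i j (Or.inl ⟨h1, h2⟩), if_pos h1, if_neg h2]; ring
      · rw [hQzero i j (Or.inr ⟨h1, h2⟩), if_neg h1, if_pos h2]; ring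
      · rw [if_neg h1, if_neg h2]; ring
    rw [hM', hQ'] at h
    have h2 : ε i * ((2 - lam k) * (∑ j, Q i j * U j k))
        = ε i * ((∑ j, Q i j * U j k) * lam k.rev) := by
      rw [h]; ring
    have h3 := mul_left_cancel₀ (hεne i) h2
    have h4 : ((2 - lam k) - lam k.rev) * (∑ j, Q i j * U j k) = 0 := by
      rw [sub_mul, h3]; ring
    rcases mul_eq_zero.mp h4 with h5 | h5
    · exact absurd (by linarith [sub_eq_zero.mp h5] : lam k.rev = 2 - lam k) hne
    · exact h5
  -- collapse of the full-spectrum sum to twice the low-frequency part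
  have collapse : ∀ i j : Fin N, i ∈ S → j ∉ S →
      ∑ k, U i k * (d k * U j k)
        = 2 * ∑ k : {k : Fin N // lam k < 1}, U i k.val * (d k.val * U j k.val) := by
    intro i j hi hj
    set f : Fin N → ℝ := fun k => U i k * (d k * U j k) with hf
    have hfr : ∀ k, f k.rev = f k := by
      intro k
      simp only [hf, hd]
      rw [hUfold k i, hUfold k j, lamrev k]
      simp only [if_pos hi, if_neg hj]
      ring
    have h2 : ∑ k ∈ univ.filter (fun k => ¬ lam k < 1), f k
        = ∑ k ∈ univ.filter (fun k => 1 < lam k), f k := by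
      refine (Finset.sum_subset ?_ ?_).symm
      · intro k hk; simp only [Finset.mem_filter, Finset.mem_univ, true_and] at hk ⊢
        linarith
      · intro k hk hk'
        simp only [Finset.mem_filter, Finset.mem_univ, true_and, not_lt] at hk hk'
        have : lam k = 1 := le_antisymm hk' hk
        simp [hf, hd, this]
    have h3 : ∑ k ∈ univ.filter (fun k => 1 < lam k), f k
        = ∑ k ∈ univ.filter (fun k => lam k < 1), f k := by
      refine Finset.sum_nbij' (fun k => Fin.rev k) (fun k => Fin.rev k) ?_ ?_ ?_ ?_ ?_
      · intro k hk
        simp only [Finset.mem_filter, Finset.mem_univ, true_and] at hk ⊢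
        rw [lamrev]; linarith
      · intro k hk
        simp only [Finset.mem_filter, Finset.mem_univ, true_and] at hk ⊢
        rw [lamrev]; linarith
      · intro k _; exact Fin.rev_rev k
      · intro k _; exact Fin.rev_rev k
      · intro k _; exact (hfr k).symm
    have h4 : ∑ k : {k : Fin N // lam k < 1}, f k.val
        = ∑ k ∈ univ.filter (fun k => lam k < 1), f k :=
      (Finset.sum_subtype _ (fun k => by simp) f).symm
    calc ∑ k, f k
        = (∑ k ∈ univ.filter (fun k => lam k < 1), f k)
          + ∑ k ∈ univ.filter (fun k => ¬ lam k < 1), f k :=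
          (Finset.sum_filter_add_sum_filter_not univ _ f).symm
      _ = 2 * ∑ k : {k : Fin N // lam k < 1}, f k.val := by rw [h2, h3, h4]; ring
  -- the full matrix identity  Q X Q = Q − M
  have hU1 : U * (Uᵀ * Q) = 1 := mul_eq_one_comm.mp hUQU
  have hdiag : (1 : Matrix (Fin N) (Fin N) ℝ) - Matrix.diagonal lam = Matrix.diagonal d := by
    ext a b
    by_cases h : a = b <;>
      simp [h, Matrix.one_apply, Matrix.diagonal_apply, hd]
  have key1 : Q * X * Q = Q - M := by
    rw [hX, ← hdiag]
    calc Q * (U * ((1 : Matrix (Fin N) (Fin N) ℝ) - Matrix.diagonal lam) * Uᵀ) * Q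
        = Q * (U * (Uᵀ * Q)) - Q * U * Matrix.diagonal lam * Uᵀ * Q := by noncomm_ring
      _ = Q * (U * (Uᵀ * Q)) - M * U * Uᵀ * Q := by rw [hMU]
      _ = Q * (U * (Uᵀ * Q)) - M * (U * (Uᵀ * Q)) := by noncomm_ring
      _ = Q - M := by rw [hU1, Matrix.mul_one, Matrix.mul_one]
  -- entries of the diagonal blocks
  have hQSS : ∀ (a b : Fin N), a ∈ S → b ∈ S → Q a b = M a b := by
    intro a b ha hb; rw [hQ]; exact if_pos (Or.inl ⟨ha, hb⟩)
  have hQSQ : ∀ (a b : {i : Fin N // i ∈ S}), QS a b = Q a.val b.val := by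
    intro a b; rw [hQS, Matrix.submatrix_apply]
    exact (hQSS a.val b.val a.2 b.2).symm
  have hQScQ : ∀ (a b : {i : Fin N // i ∉ S}), QSc a b = Q a.val b.val := by
    intro a b; rw [hQSc, Matrix.submatrix_apply]
    have : Q a.val b.val = M a.val b.val := by
      rw [hQ]; exact if_pos (Or.inr ⟨a.2, b.2⟩)
    exact this.symm
  have hMsymm : ∀ a b : Fin N, M b a = M a b := by
    intro a b
    have h := congrFun (congrFun hM.1 a) b
    simpa [Matrix.conjTranspose_apply] using h
  -- QS is positive definite
  have hQSpd : QS.PosDef := by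
    rw [Matrix.posDef_iff_dotProduct_mulVec]
    constructor
    · ext a b
      simp only [Matrix.conjTranspose_apply, hQS, Matrix.submatrix_apply, star_trivial]
      exact hMsymm a.val b.val
    · intro x hx
      set y : Fin N → ℝ := fun i => if h : i ∈ S then x ⟨i, h⟩ else 0 with hy
      have hy0 : y ≠ 0 := by
        obtain ⟨a, ha⟩ := Function.ne_iff.mp hx
        intro h0
        apply ha
        have h1 := congrFun h0 a.val
        simpa [hy, a.2] using h1
      have hyz : ∀ i : Fin N, i ∉ S → y i = 0 := by
        intro i hi; simp only [hy]; rw [dif_neg hi]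
      have e0 : ∑ i, (y i * ∑ j, Q i j * y j)
          = ∑ i : {i : Fin N // i ∈ S}, (y i.val * ∑ j, Q i.val j * y j) :=
        sum_subtype_eq (fun i => i ∈ S) (fun i => y i * ∑ j, Q i j * y j)
          (fun i hi => mul_eq_zero_of_left (hyz i hi) _)
      have e1 : ∀ a : {i : Fin N // i ∈ S},
          ∑ j, Q a.val j * y j = ∑ b : {i : Fin N // i ∈ S}, Q a.val b.val * y b.val :=
        fun a => sum_subtype_eq (fun j => j ∈ S) (fun j => Q a.val j * y j)
          (fun j hj => mul_eq_zero_of_right _ (hyz j hj))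
      have hdot : dotProduct (star x) (QS *ᵥ x) = dotProduct (star y) (Q *ᵥ y) := by
        simp only [star_trivial, dotProduct, Matrix.mulVec]
        rw [e0]
        refine Finset.sum_congr rfl (fun a _ => ?_)
        rw [e1 a]
        have hya : y a.val = x a := by simp [hy, a.2]
        rw [hya]
        congr 1
        refine Finset.sum_congr rfl (fun b _ => ?_)
        rw [hQSQ a b]
        have hyb : y b.val = x b := by simp [hy, b.2]
        rw [hyb]
      rw [hdot]
      exact hQpd.dotProduct_mulVec_pos hy0
  -- block extraction: QS * (B * QSc) = −M_{S,Sᶜ}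
  set B : Matrix {i : Fin N // i ∈ S} {i : Fin N // i ∉ S} ℝ :=
      X.submatrix Subtype.val Subtype.val with hB
  have stepA : QS * (B * QSc)
      = -(M.submatrix (Subtype.val : {i : Fin N // i ∈ S} → Fin N)
          (Subtype.val : {i : Fin N // i ∉ S} → Fin N)) := by
    ext i j
    have hL := congrFun (congrFun key1 i.val) j.val
    have hRHS : (Q - M) i.val j.val = -(M i.val j.val) := by
      rw [Matrix.sub_apply, hQzero i.val j.val (Or.inl ⟨i.2, j.2⟩)]; ring
    have hexp : (Q * X * Q) i.val j.val
        = ∑ b : {i : Fin N // i ∉ S},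
            (∑ a : {i : Fin N // i ∈ S}, Q i.val a.val * X a.val b.val) * Q b.val j.val := by
      rw [Matrix.mul_apply]
      have e2 : (∑ b, (Q * X) i.val b * Q b j.val)
          = ∑ b : {i : Fin N // i ∉ S}, (Q * X) i.val b.val * Q b.val j.val :=
        sum_subtype_eq (fun b => b ∉ S) (fun b => (Q * X) i.val b * Q b j.val)
          (fun b hb => mul_eq_zero_of_right _
            (hQzero b j.val (Or.inl ⟨not_not.mp hb, j.2⟩)))
      rw [e2]
      refine Finset.sum_congr rfl (fun b _ => ?_)
      congr 1
      rw [Matrix.mul_apply]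
      exact sum_subtype_eq (fun a => a ∈ S) (fun a => Q i.val a * X a b.val)
        (fun a ha => mul_eq_zero_of_left (hQzero i.val a (Or.inl ⟨i.2, ha⟩)) _)
    have htar : (QS * (B * QSc)) i j
        = ∑ b : {i : Fin N // i ∉ S},
            (∑ a : {i : Fin N // i ∈ S}, Q i.val a.val * X a.val b.val) * Q b.val j.val := by
      rw [Matrix.mul_apply]
      have e3 : (∑ a : {i : Fin N // i ∈ S}, QS i a * (B * QSc) a j)
          = ∑ a : {i : Fin N // i ∈ S},
              ∑ b : {i : Fin N // i ∉ S}, Q i.val a.val * (X a.val b.val * Q b.val j.val) := by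
        refine Finset.sum_congr rfl (fun a _ => ?_)
        rw [Matrix.mul_apply, hQSQ, Finset.mul_sum]
        refine Finset.sum_congr rfl (fun b _ => ?_)
        rw [hB, Matrix.submatrix_apply, hQScQ]
      rw [e3, Finset.sum_comm]
      refine Finset.sum_congr rfl (fun b _ => ?_)
      rw [Finset.sum_mul]
      exact Finset.sum_congr rfl (fun a _ => by ring)
    calc (QS * (B * QSc)) i j
        = (Q * X * Q) i.val j.val := by rw [htar, hexp]
      _ = (Q - M) i.val j.val := hL
      _ = -(M i.val j.val) := hRHS
      _ = (-(M.submatrix (Subtype.val : {i : Fin N // i ∈ S} → Fin N)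
            (Subtype.val : {i : Fin N // i ∉ S} → Fin N))) i j := by
          simp [Matrix.neg_apply, Matrix.submatrix_apply]
  -- the collapse at the level of blocks
  have hdiag' : ((1 : Matrix {k : Fin N // lam k < 1} {k : Fin N // lam k < 1} ℝ)
        - Matrix.diagonal (fun k : {k : Fin N // lam k < 1} => lam k.val))
      = Matrix.diagonal (fun k : {k : Fin N // lam k < 1} => d k.val) := by
    ext a b
    by_cases h : a = b <;>
      simp [h, Matrix.one_apply, Matrix.diagonal_apply, hd]
  have stepB : B = (2 : ℝ) • (USL *
      ((1 : Matrix {k : Fin N // lam k < 1} {k : Fin N // lam k < 1} ℝ) -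
        Matrix.diagonal (fun k : {k : Fin N // lam k < 1} => lam k.val)) * UScLᵀ) := by
    rw [hdiag']
    ext i j
    have hXij : X i.val j.val = ∑ k, U i.val k * (d k * U j.val k) := by
      rw [hX, Matrix.mul_apply]
      refine Finset.sum_congr rfl (fun k _ => ?_)
      rw [Matrix.mul_diagonal, Matrix.transpose_apply]; ring
    have hRij : (USL * Matrix.diagonal (fun k : {k : Fin N // lam k < 1} => d k.val) * UScLᵀ) i j
        = ∑ k : {k : Fin N // lam k < 1}, U i.val k.val * (d k.val * U j.val k.val) := by
      rw [Matrix.mul_apply]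
      refine Finset.sum_congr rfl (fun k _ => ?_)
      rw [Matrix.mul_diagonal, Matrix.transpose_apply, hUSL, hUScL,
        Matrix.submatrix_apply, Matrix.submatrix_apply]
      ring
    calc B i j = X i.val j.val := by rw [hB, Matrix.submatrix_apply]
      _ = ∑ k, U i.val k * (d k * U j.val k) := hXij
      _ = 2 * ∑ k : {k : Fin N // lam k < 1}, U i.val k.val * (d k.val * U j.val k.val) :=
          collapse i.val j.val i.2 j.2
      _ = ((2 : ℝ) • (USL * Matrix.diagonal (fun k : {k : Fin N // lam k < 1} => d k.val)
            * UScLᵀ)) i j := by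
          rw [Matrix.smul_apply, hRij, smul_eq_mul]
  -- conclusion
  have hdet : IsUnit QS.det := hQSpd.det_pos.ne'.isUnit
  have hfinal : B * QSc = -(QS⁻¹ * M.submatrix (Subtype.val : {i : Fin N // i ∈ S} → Fin N)
      (Subtype.val : {i : Fin N // i ∉ S} → Fin N)) := by
    have h := congrArg (fun Z => QS⁻¹ * Z) stepA
    rw [← Matrix.mul_assoc, Matrix.nonsing_inv_mul QS hdet, Matrix.one_mul,
      Matrix.mul_neg] at h
    exact h
  rw [← hfinal, stepB, Matrix.smul_mul]
end

section
/- (Theorem 3) Let Σ be a real symmetric positive definite N×N matrix, M = Σ⁻¹, S ⊆ {1,…,N}, Q the block-diagonal part of M with respect to (S, Sᶜ), and U a Q-orthonormal generalized eigenbasis of (M,Q) with folding pairing u_{N+1−k} = J u_k and |L| = |S|. Then the optimal linear (MMSE) estimator of x_S from x_{Sᶜ} under a zero-mean Gaussian with covariance Σ is a low-frequency subspace reconstruction with respect to the sampling-set-adaptive GFT: Σ_{SSᶜ} (Σ_{SᶜSᶜ})⁻¹ = 2 U_{SL} (I − Λ_L) U_{SᶜL}ᵀ Q_{Sᶜ}.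 -/
open Matrix

/-- The `Fin.rev` permutation matrix. -/
def revMat (N : ℕ) : Matrix (Fin N) (Fin N) ℝ :=
  Matrix.of fun i j => if i = Fin.rev j then (1:ℝ) else 0

lemma mul_revMat {N : ℕ} (A : Matrix (Fin N) (Fin N) ℝ) (i j : Fin N) :
    (A * revMat N) i j = A i (Fin.rev j) := by
  simp [revMat, Matrix.mul_apply]

lemma revMat_mul {N : ℕ} (A : Matrix (Fin N) (Fin N) ℝ) (i j : Fin N) :
    (revMat N * A) i j = A (Fin.rev i) j := by
  simp only [revMat, Matrix.mul_apply, Matrix.of_apply, ite_mul, one_mul, zero_mul]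
  rw [Finset.sum_eq_single (Fin.rev i)]
  · simp
  · intro b _ hb; rw [if_neg]; intro h; exact hb (by rw [h, Fin.rev_rev])
  · simp

/-- Sum over `Fin N` of a function vanishing on a `p`-complement equals the
sum over the subtype. -/
lemma sum_subtype_of_vanish {N : ℕ} {p : Fin N → Prop} [DecidablePred p]
    (f : Fin N → ℝ) (hf : ∀ i, ¬ p i → f i = 0) :
    ∑ i, f i = ∑ i : {i : Fin N // p i}, f i.val := by
  rw [← Finset.sum_subtype (Finset.univ.filter p) (by simp) f]
  refine (Finset.sum_subset (Finset.filter_subset _ _) ?_).symm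
  intro i _ hi
  exact hf i (by simpa using hi)

lemma sum_subtype_eq_filter {N : ℕ} {p : Fin N → Prop} [DecidablePred p]
    (f : Fin N → ℝ) :
    ∑ i : {i : Fin N // p i}, f i.val = ∑ i ∈ Finset.univ.filter p, f i :=
  (Finset.sum_subtype (Finset.univ.filter p) (by simp) f).symm

/-- Theorem 3: for a zero-mean Gaussian with covariance Σ and precision
M = Σ⁻¹, the MMSE coefficient matrix for estimating x_S from x_{Sᶜ} is a
low-frequency subspace reconstruction with respect to the sampling-set-adaptive
GFT: Σ_{SSᶜ} (Σ_{SᶜSᶜ})⁻¹ = 2 U_{SL} (I − Λ_L) U_{SᶜL}ᵀ Q_{Sᶜ}. -/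
theorem mmse_is_low_freq_reconstruction
    {N : ℕ} (hN : 1 ≤ N)
    (Sigma : Matrix (Fin N) (Fin N) ℝ) (hSigma : Sigma.PosDef)
    (M : Matrix (Fin N) (Fin N) ℝ) (hMdef : M = Sigma⁻¹)
    (S : Finset (Fin N))
    (J : Matrix (Fin N) (Fin N) ℝ)
    (hJ : J = Matrix.diagonal (fun i => if i ∈ S then (1 : ℝ) else -1))
    (Q : Matrix (Fin N) (Fin N) ℝ)
    (hQ : ∀ i j, Q i j =
      if (i ∈ S ∧ j ∈ S) ∨ (i ∉ S ∧ j ∉ S) then M i j else 0)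
    (lam : Fin N → ℝ) (hlam : Monotone lam)
    (U : Matrix (Fin N) (Fin N) ℝ)
    (hUQU : Uᵀ * Q * U = 1)
    (hMU : M * U = Q * U * Matrix.diagonal lam)
    (hfold : ∀ k : Fin N, (fun i => U i k.rev) = J.mulVec (fun i => U i k))
    (hcard : Fintype.card {k : Fin N // lam k < 1} =
      Fintype.card {i : Fin N // i ∈ S})
    (QSc : Matrix {i : Fin N // i ∉ S} {i : Fin N // i ∉ S} ℝ)
    (hQSc : QSc = M.submatrix Subtype.val Subtype.val)
    (USL : Matrix {i : Fin N // i ∈ S} {k : Fin N // lam k < 1} ℝ)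
    (hUSL : USL = U.submatrix Subtype.val Subtype.val)
    (UScL : Matrix {i : Fin N // i ∉ S} {k : Fin N // lam k < 1} ℝ)
    (hUScL : UScL = U.submatrix Subtype.val Subtype.val) :
    Sigma.submatrix (Subtype.val : {i : Fin N // i ∈ S} → Fin N)
          (Subtype.val : {i : Fin N // i ∉ S} → Fin N) *
        (Sigma.submatrix (Subtype.val : {i : Fin N // i ∉ S} → Fin N)
          (Subtype.val : {i : Fin N // i ∉ S} → Fin N))⁻¹ =
      (2 : ℝ) • (USL *
        ((1 : Matrix {k : Fin N // lam k < 1} {k : Fin N // lam k < 1} ℝ) -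
          Matrix.diagonal (fun k : {k : Fin N // lam k < 1} => lam k.val)) *
        UScLᵀ * QSc) := by
  classical
  -- basic facts about Sigma, M
  have hdet : IsUnit Sigma.det := hSigma.det_pos.ne'.isUnit
  have hSM : Sigma * M = 1 := by rw [hMdef]; exact Matrix.mul_nonsing_inv Sigma hdet
  have hSsymm : Sigmaᵀ = Sigma := hSigma.isHermitian.eq
  have hMsymm : Mᵀ = M := by rw [hMdef, Matrix.transpose_nonsing_inv, hSsymm]
  have hMsym' : ∀ i j, M j i = M i j := fun i j => congrFun (congrFun hMsymm i) j
  have hQsymm : Qᵀ = Q := by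
    ext i j
    rw [Matrix.transpose_apply, hQ, hQ]
    by_cases hi : i ∈ S <;> by_cases hj : j ∈ S <;> simp [hi, hj, hMsym']
  -- U is invertible
  have hU_right : U * (Uᵀ * Q) = 1 := mul_eq_one_comm.mp hUQU
  have hQUU : Q * (U * Uᵀ) = 1 := by
    have h := congrArg Matrix.transpose hU_right
    simpa [Matrix.transpose_mul, hQsymm, Matrix.mul_assoc] using h
  -- lam never vanishes
  have hU_eq : Sigma * (Q * U * Matrix.diagonal lam) = U := by
    rw [← hMU, ← Matrix.mul_assoc, hSM, Matrix.one_mul]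
  have hlamne : ∀ k, lam k ≠ 0 := by
    intro k hk
    have hcol : ∀ i, U i k = 0 := by
      intro i
      have h := congrFun (congrFun hU_eq i) k
      rw [← h]
      simp [Matrix.mul_apply, Matrix.diagonal_apply, mul_ite, mul_zero,
        Finset.sum_ite_eq', hk]
    have h1 : (1 : Matrix (Fin N) (Fin N) ℝ) k k = 0 := by
      rw [← hUQU]
      simp [Matrix.mul_apply, hcol]
    simp at h1
  -- spectral decomposition of Sigma
  have hLamLi : Matrix.diagonal lam * Matrix.diagonal (fun k => (lam k)⁻¹) = 1 := by
    rw [Matrix.diagonal_mul_diagonal]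
    have : (fun k => lam k * (lam k)⁻¹) = fun _ => (1:ℝ) :=
      funext fun k => mul_inv_cancel₀ (hlamne k)
    rw [this, Matrix.diagonal_one]
  have hSQU : Sigma * (Q * U) = U * Matrix.diagonal (fun k => (lam k)⁻¹) := by
    have h := congrArg (fun X => X * Matrix.diagonal (fun k => (lam k)⁻¹)) hU_eq
    simp only [Matrix.mul_assoc] at h
    rw [hLamLi, Matrix.mul_one] at h
    exact h
  have hSpec : Sigma = U * Matrix.diagonal (fun k => (lam k)⁻¹) * Uᵀ := by
    calc Sigma = Sigma * (Q * (U * Uᵀ)) := by rw [hQUU, Matrix.mul_one]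
    _ = (Sigma * (Q * U)) * Uᵀ := by simp only [Matrix.mul_assoc]
    _ = U * Matrix.diagonal (fun k => (lam k)⁻¹) * Uᵀ := by rw [hSQU]
  -- the folding relation, entrywise and as a matrix identity
  have hUrev : ∀ (k i : Fin N), U i (Fin.rev k) = (if i ∈ S then 1 else -1) * U i k := by
    intro k i
    have h := congrFun (hfold k) i
    simpa [hJ, Matrix.mulVec, dotProduct, Matrix.diagonal_apply, ite_mul,
      Finset.sum_ite_eq, Finset.mem_univ] using h
  have hJUmat : J * U = U * revMat N := by
    ext i k
    rw [mul_revMat, hJ, Matrix.diagonal_mul, ← hUrev]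
  have hJJ : J * J = 1 := by
    rw [hJ, Matrix.diagonal_mul_diagonal]
    have : (fun i => (if i ∈ S then (1:ℝ) else -1) * (if i ∈ S then (1:ℝ) else -1))
        = fun _ => (1:ℝ) := funext fun i => by by_cases hi : i ∈ S <;> simp [hi]
    rw [this, Matrix.diagonal_one]
  have hJMJ : J * M * J = (2:ℝ) • Q - M := by
    ext i k
    rw [hJ]
    simp only [Matrix.diagonal_mul, Matrix.mul_diagonal, Matrix.sub_apply,
      Matrix.smul_apply, smul_eq_mul, hQ]
    by_cases hi : i ∈ S <;> by_cases hk : k ∈ S <;> simp [hi, hk] <;> ring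
  have hJQ : J * Q = Q * J := by
    ext i k
    rw [hJ, Matrix.diagonal_mul, Matrix.mul_diagonal, hQ]
    by_cases hi : i ∈ S <;> by_cases hk : k ∈ S <;> simp [hi, hk]
  -- eigenvalue folding: lam (rev k) = 2 - lam k
  have hkey1 : M * (J * U) = Q * (J * U) * ((2:ℝ) • (1 : Matrix (Fin N) (Fin N) ℝ)
      - Matrix.diagonal lam) := by
    have e2 : Q * (J * U) = J * (Q * U) := by
      rw [← Matrix.mul_assoc, ← hJQ, Matrix.mul_assoc]
    have e1 : Q * (J * U) * ((2:ℝ) • (1 : Matrix (Fin N) (Fin N) ℝ)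
        - Matrix.diagonal lam) = J * (((2:ℝ) • Q - M) * U) := by
      simp only [Matrix.mul_sub, Matrix.sub_mul, Matrix.mul_smul, Matrix.smul_mul,
        Matrix.mul_one, hMU, e2]
      simp only [Matrix.mul_assoc]
    rw [e1, ← hJMJ]
    calc M * (J * U) = (J * J) * (M * (J * U)) := by rw [hJJ, Matrix.one_mul]
    _ = J * (J * M * J * U) := by simp only [Matrix.mul_assoc]
  have hLR : Matrix.diagonal lam * revMat N =
      revMat N * ((2:ℝ) • (1 : Matrix (Fin N) (Fin N) ℝ) - Matrix.diagonal lam) := by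
    have h2 : Q * U * (Matrix.diagonal lam * revMat N) =
        Q * U * (revMat N * ((2:ℝ) • (1 : Matrix (Fin N) (Fin N) ℝ)
          - Matrix.diagonal lam)) := by
      have l1 : Q * U * (Matrix.diagonal lam * revMat N) = M * (J * U) := by
        rw [hJUmat, ← Matrix.mul_assoc, ← hMU, Matrix.mul_assoc]
      have l2 : M * (J * U) = Q * U * (revMat N * ((2:ℝ) • (1 : Matrix (Fin N) (Fin N) ℝ)
          - Matrix.diagonal lam)) := by
        rw [hkey1, hJUmat]
        simp only [Matrix.mul_assoc]
      rw [l1, l2]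
    have h3 := congrArg (fun X => Uᵀ * X) h2
    simp only [← Matrix.mul_assoc] at h3
    rwa [hUQU, Matrix.one_mul, Matrix.one_mul] at h3
  have hlamrev : ∀ k, lam (Fin.rev k) = 2 - lam k := by
    intro k
    have h := congrFun (congrFun hLR k) (Fin.rev k)
    rw [Matrix.diagonal_mul, revMat_mul] at h
    simp [revMat, Matrix.sub_apply, Matrix.smul_apply, Matrix.one_apply] at h
    linarith
  -- the Sᶜ-block of Q, as a full matrix
  set Qc : Matrix (Fin N) (Fin N) ℝ :=
    Matrix.of (fun l m => if l ∉ S ∧ m ∉ S then M l m else 0) with hQcdef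
  have hQJ2 : Q * J = Q - (2:ℝ) • Qc := by
    ext i k
    rw [hJ, Matrix.mul_diagonal]
    simp only [Matrix.sub_apply, Matrix.smul_apply, smul_eq_mul, hQ, hQcdef,
      Matrix.of_apply]
    by_cases hi : i ∈ S <;> by_cases hk : k ∈ S <;> simp [hi, hk] <;> ring
  have hmix : Uᵀ * (Q * J) * U = revMat N := by
    have h : Uᵀ * (Q * J) * U = Uᵀ * Q * (J * U) := by simp only [Matrix.mul_assoc]
    rw [h, hJUmat, ← Matrix.mul_assoc, hUQU, Matrix.one_mul]
  have hQcU : Uᵀ * Qc * U = (2⁻¹:ℝ) • ((1 : Matrix (Fin N) (Fin N) ℝ) - revMat N) := by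
    have hq : (2:ℝ) • Qc = Q - Q * J := by rw [hQJ2, sub_sub_cancel]
    have h4 : Uᵀ * ((2:ℝ) • Qc) * U = 1 - revMat N := by
      rw [hq, Matrix.mul_sub, Matrix.sub_mul, hUQU, hmix]
    have h6 : Uᵀ * ((2:ℝ) • Qc) * U = (2:ℝ) • (Uᵀ * Qc * U) := by
      rw [Matrix.mul_smul, Matrix.smul_mul]
    rw [h6] at h4
    calc Uᵀ * Qc * U = (2⁻¹:ℝ) • ((2:ℝ) • (Uᵀ * Qc * U)) := by
          rw [smul_smul]; norm_num
    _ = _ := by rw [h4]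
  have hQcS : Uᵀ * Qc * Sigma = (2⁻¹:ℝ) • (((1 : Matrix (Fin N) (Fin N) ℝ) - revMat N)
      * (Matrix.diagonal (fun k => (lam k)⁻¹) * Uᵀ)) := by
    conv_lhs => rw [hSpec]
    calc Uᵀ * Qc * (U * Matrix.diagonal (fun k => (lam k)⁻¹) * Uᵀ)
        = (Uᵀ * Qc * U) * (Matrix.diagonal (fun k => (lam k)⁻¹) * Uᵀ) := by
          simp only [Matrix.mul_assoc]
    _ = _ := by rw [hQcU, Matrix.smul_mul]
  -- positive definiteness of the Sᶜ-block of Sigma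
  have hSubPD : (Sigma.submatrix (Subtype.val : {i : Fin N // i ∉ S} → Fin N)
      Subtype.val).PosDef := by
    refine Matrix.PosDef.of_dotProduct_mulVec_pos (hSigma.isHermitian.submatrix _) fun x hx => ?_
    set y : Fin N → ℝ := fun i => if h : ¬ i ∈ S then x ⟨i, h⟩ else 0 with hy
    have hyval : ∀ m : {i : Fin N // i ∉ S}, y m.val = x m := by
      intro m
      simp only [hy, m.prop, dif_pos, not_false_iff]
    have hyzero : ∀ i ∈ S, y i = 0 := by
      intro i hi
      simp [hy, hi]
    have hyne : y ≠ 0 := by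
      intro h0
      apply hx
      funext m
      have := congrFun h0 m.val
      rw [hyval m] at this
      exact this
    have hq := hSigma.dotProduct_mulVec_pos hyne
    have heq : dotProduct (star x) ((Sigma.submatrix
        (Subtype.val : {i : Fin N // i ∉ S} → Fin N)
        (Subtype.val : {i : Fin N // i ∉ S} → Fin N)) *ᵥ x)
        = dotProduct (star y) (Sigma *ᵥ y) := by
      simp only [dotProduct, Matrix.mulVec, Pi.star_apply, star_trivial, id_eq,
        Matrix.submatrix_apply]
      rw [sum_subtype_of_vanish (p := fun i => i ∉ S)
        (fun i => y i * ∑ j, Sigma i j * y j)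
        (fun i hi => by simp [hyzero i (not_not.mp hi)])]
      apply Finset.sum_congr rfl
      intro m _
      rw [hyval m]
      congr 1
      rw [sum_subtype_of_vanish (p := fun j => j ∉ S)
        (fun j => Sigma m.val j * y j)
        (fun j hj => by simp [hyzero j (not_not.mp hj)])]
      apply Finset.sum_congr rfl
      intro j _
      rw [hyval j]
    rw [heq]
    exact hq
  have hdet2 : IsUnit (Sigma.submatrix (Subtype.val : {i : Fin N // i ∉ S} → Fin N)
      Subtype.val).det := hSubPD.det_pos.ne'.isUnit
  -- it suffices to prove the identity before multiplying by the inverse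
  suffices hKey : Sigma.submatrix (Subtype.val : {i : Fin N // i ∈ S} → Fin N)
      (Subtype.val : {i : Fin N // i ∉ S} → Fin N) =
      ((2 : ℝ) • (USL *
        ((1 : Matrix {k : Fin N // lam k < 1} {k : Fin N // lam k < 1} ℝ) -
          Matrix.diagonal (fun k : {k : Fin N // lam k < 1} => lam k.val)) *
        UScLᵀ * QSc)) * Sigma.submatrix
          (Subtype.val : {i : Fin N // i ∉ S} → Fin N)
        (Subtype.val : {i : Fin N // i ∉ S} → Fin N) by
    rw [hKey, Matrix.mul_assoc, Matrix.mul_nonsing_inv _ hdet2, Matrix.mul_one]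
  -- Step I: the product U_{SᶜL}ᵀ Q_{Sᶜ} Σ_{SᶜSᶜ}
  have hW : UScLᵀ * QSc * (Sigma.submatrix
      (Subtype.val : {i : Fin N // i ∉ S} → Fin N)
        (Subtype.val : {i : Fin N // i ∉ S} → Fin N)) =
      Matrix.of (fun (k : {k : Fin N // lam k < 1}) (j : {i : Fin N // i ∉ S}) =>
        (lam k.val * (2 - lam k.val))⁻¹ * U j.val k.val) := by
    ext k j
    have hleft : (UScLᵀ * QSc * Sigma.submatrix
        (Subtype.val : {i : Fin N // i ∉ S} → Fin N)
        (Subtype.val : {i : Fin N // i ∉ S} → Fin N)) k j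
        = (Uᵀ * Qc * Sigma) k.val j.val := by
      simp only [Matrix.mul_apply, Matrix.transpose_apply, hUScL, hQSc,
        Matrix.submatrix_apply]
      have inner_eq : ∀ m : Fin N, m ∉ S →
          (∑ l, U l k.val * Qc l m) =
          ∑ l : {i : Fin N // i ∉ S}, U l.val k.val * M l.val m := by
        intro m hm
        rw [sum_subtype_of_vanish (p := fun l => l ∉ S)
          (fun l => U l k.val * Qc l m)
          (fun l hl => by simp [hQcdef, not_not.mp hl])]
        apply Finset.sum_congr rfl
        intro l _
        simp [hQcdef, l.prop, hm]
      have outer0 : ∀ m : Fin N, ¬ m ∉ S →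
          (∑ l, U l k.val * Qc l m) * Sigma m j.val = 0 := by
        intro m hm
        have : (∑ l, U l k.val * Qc l m) = 0 := by
          apply Finset.sum_eq_zero
          intro l _
          simp [hQcdef, not_not.mp hm]
        rw [this, zero_mul]
      symm
      rw [sum_subtype_of_vanish (p := fun m => m ∉ S)
        (fun m => (∑ l, U l k.val * Qc l m) * Sigma m j.val) outer0]
      apply Finset.sum_congr rfl
      intro m _
      rw [inner_eq m.val m.prop]
    rw [hleft, hQcS]
    have hentry : (((1 : Matrix (Fin N) (Fin N) ℝ) - revMat N)
        * (Matrix.diagonal (fun k => (lam k)⁻¹) * Uᵀ)) k.val j.val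
        = (lam k.val)⁻¹ * U j.val k.val
          - (lam (Fin.rev k.val))⁻¹ * U j.val (Fin.rev k.val) := by
      rw [Matrix.sub_mul, Matrix.one_mul, Matrix.sub_apply, revMat_mul]
      simp [Matrix.diagonal_mul, Matrix.transpose_apply]
    rw [Matrix.smul_apply, hentry, hlamrev, hUrev]
    have hjS : j.val ∉ S := j.prop
    have hk1 : lam k.val < 1 := k.prop
    have hne0 : lam k.val ≠ 0 := hlamne k.val
    have hne2 : (2:ℝ) - lam k.val ≠ 0 := by
      have : (1:ℝ) < 2 - lam k.val := by linarith
      linarith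
    simp only [hjS, if_neg, if_false, Matrix.of_apply, smul_eq_mul, not_false_iff]
    field_simp
    ring
  -- Step II: rearrange the right-hand side
  have hdiag : (1 : Matrix {k : Fin N // lam k < 1} {k : Fin N // lam k < 1} ℝ) -
      Matrix.diagonal (fun k : {k : Fin N // lam k < 1} => lam k.val) =
      Matrix.diagonal (fun k : {k : Fin N // lam k < 1} => 1 - lam k.val) := by
    ext a b
    by_cases hab : a = b <;> simp [hab, Matrix.one_apply, Matrix.diagonal_apply]
  have hRHS : ((2 : ℝ) • (USL *
      ((1 : Matrix {k : Fin N // lam k < 1} {k : Fin N // lam k < 1} ℝ) -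
        Matrix.diagonal (fun k : {k : Fin N // lam k < 1} => lam k.val)) *
      UScLᵀ * QSc)) * Sigma.submatrix
        (Subtype.val : {i : Fin N // i ∉ S} → Fin N)
        (Subtype.val : {i : Fin N // i ∉ S} → Fin N) =
      (2 : ℝ) • ((USL * Matrix.diagonal (fun k : {k : Fin N // lam k < 1} =>
        1 - lam k.val)) * (UScLᵀ * QSc * Sigma.submatrix
        (Subtype.val : {i : Fin N // i ∉ S} → Fin N)
        (Subtype.val : {i : Fin N // i ∉ S} → Fin N))) := by
    rw [hdiag, Matrix.smul_mul]
    simp only [Matrix.mul_assoc]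
  rw [hRHS, hW]
  -- Step III: entrywise computation
  ext i j
  have hiS : i.val ∈ S := i.prop
  have hjS : j.val ∉ S := j.prop
  conv_lhs => rw [Matrix.submatrix_apply, hSpec]
  simp only [Matrix.mul_apply, Matrix.transpose_apply, Matrix.diagonal_apply,
    mul_ite, mul_zero, ite_mul, zero_mul, Finset.sum_ite_eq', Finset.mem_univ,
    if_true, Matrix.smul_apply, smul_eq_mul, hUSL, Matrix.submatrix_apply,
    Matrix.of_apply]
  -- now both sides are explicit sums
  set g : Fin N → ℝ := fun k => U i.val k * (lam k)⁻¹ * U j.val k with hg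
  set h : Fin N → ℝ := fun k =>
    2⁻¹ * ((lam k)⁻¹ - (2 - lam k)⁻¹) * (U i.val k * U j.val k) with hh
  have hrevsum : ∀ (f : Fin N → ℝ), ∑ k, f k = ∑ k, f (Fin.rev k) := by
    intro f
    exact (Fintype.sum_bijective Fin.rev Fin.rev_bijective
      (fun k => f (Fin.rev k)) f (fun k => rfl)).symm
  have hgh : ∑ k, g k = ∑ k, h k := by
    have h1 : ∑ k, h k = 2⁻¹ * (∑ k, (g k + g (Fin.rev k))) := by
      rw [Finset.mul_sum]
      apply Finset.sum_congr rfl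
      intro k _
      simp only [hh, hg]
      rw [hUrev k i.val, hUrev k j.val, hlamrev k]
      simp only [hiS, if_pos, hjS, if_neg, not_false_iff]
      ring
    rw [h1, Finset.sum_add_distrib, ← hrevsum g]
    ring
  have hsplit : ∑ k, h k = ∑ k ∈ Finset.univ.filter (fun k => lam k < 1), h k
      + ∑ k ∈ Finset.univ.filter (fun k => ¬ lam k < 1), h k :=
    (Finset.sum_filter_add_sum_filter_not Finset.univ _ h).symm
  have e1 : ∑ k ∈ Finset.univ.filter (fun k => ¬ lam k < 1), h k
      = ∑ k ∈ Finset.univ.filter (fun k => 1 < lam k), h k := by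
    rw [← Finset.sum_filter_add_sum_filter_not
      (Finset.univ.filter (fun k => ¬ lam k < 1)) (fun k => 1 < lam k) h]
    have e2 : (Finset.univ.filter (fun k => ¬ lam k < 1)).filter
        (fun k => 1 < lam k) = Finset.univ.filter (fun k => 1 < lam k) := by
      ext k
      simp only [Finset.mem_filter, Finset.mem_univ, true_and]
      constructor
      · exact fun hK => hK.2
      · intro hK; exact ⟨by linarith, hK⟩
    have e3 : ∑ k ∈ (Finset.univ.filter (fun k => ¬ lam k < 1)).filter
        (fun k => ¬ 1 < lam k), h k = 0 := by
      apply Finset.sum_eq_zero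
      intro k hk
      simp only [Finset.mem_filter, Finset.mem_univ, true_and] at hk
      have hk1 : lam k = 1 := le_antisymm (not_lt.mp hk.2) (not_lt.mp hk.1)
      norm_num [hh, hk1]
    rw [e2, e3, add_zero]
  have e4 : ∑ k ∈ Finset.univ.filter (fun k => 1 < lam k), h k
      = ∑ k ∈ Finset.univ.filter (fun k => lam k < 1), h k := by
    refine Finset.sum_nbij' Fin.rev Fin.rev ?_ ?_ ?_ ?_ ?_
    · intro a ha
      simp only [Finset.mem_filter, Finset.mem_univ, true_and] at ha ⊢
      rw [hlamrev]; linarith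
    · intro a ha
      simp only [Finset.mem_filter, Finset.mem_univ, true_and] at ha ⊢
      rw [hlamrev]; linarith
    · intro a _; exact Fin.rev_rev a
    · intro a _; exact Fin.rev_rev a
    · intro a _
      simp only [hh]
      rw [hlamrev, hUrev a i.val, hUrev a j.val]
      simp only [hiS, if_pos, hjS, if_neg, not_false_iff]
      have hx : (2:ℝ) - (2 - lam a) = lam a := by ring
      rw [hx]
      ring
  have hfinal : ∑ k, g k
      = 2 * ∑ k ∈ Finset.univ.filter (fun k => lam k < 1), h k := by
    rw [hgh, hsplit, e1, e4]; ring
  -- identify the two sides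
  have htarget : ∀ k : {k : Fin N // lam k < 1},
      U i.val k.val * (1 - lam k.val) *
        ((lam k.val * (2 - lam k.val))⁻¹ * U j.val k.val) = h k.val := by
    intro k
    have hk1 : lam k.val < 1 := k.prop
    have hne0 : lam k.val ≠ 0 := hlamne k.val
    have hne2 : (2:ℝ) - lam k.val ≠ 0 := by
      have : (1:ℝ) < 2 - lam k.val := by linarith
      linarith
    simp only [hh]
    field_simp
    ring
  calc ∑ k, g k = 2 * ∑ k ∈ Finset.univ.filter (fun k => lam k < 1), h k := hfinal
  _ = 2 * ∑ k : {k : Fin N // lam k < 1}, h k.val := by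
      rw [sum_subtype_eq_filter]
  _ = 2 * ∑ k : {k : Fin N // lam k < 1},
      U i.val k.val * (1 - lam k.val) *
        ((lam k.val * (2 - lam k.val))⁻¹ * U j.val k.val) := by
      congr 1
      exact (Finset.sum_congr rfl (fun k _ => htarget k)).symm
end

section
/- Under the spectral-folding setup with |L| = |S| = s ≤ |Sᶜ| and Q_S = M_{SS}, Q_{Sᶜ} = M_{SᶜSᶜ} positive definite, the s nonzero singular values of the normalized cross block Q_S^{−1/2} M_{SSᶜ} Q_{Sᶜ}^{−1/2} are exactly 1 − λ_k for k ∈ L (counted with multiplicity); in particular, its smallest nonzero (s-th largest) singular value equals 1 − λ_s, where λ_s is the largest generalized eigenvalue of (M, Q) that is smaller than 1. -/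
open Matrix Polynomial
noncomputable def Matrix.PosSemidef.sqrt {n : Type*} [Fintype n]
    [DecidableEq n] {A : Matrix n n ℝ} (hA : A.PosSemidef) : Matrix n n ℝ :=
  hA.1.eigenvectorUnitary.1 * diagonal ((RCLike.ofReal : ℝ → ℝ) ∘ Real.sqrt ∘ hA.1.eigenvalues) *
  (star hA.1.eigenvectorUnitary : Matrix n n ℝ)

lemma Matrix.PosSemidef.sqrt_mul_self {n : Type*} [Fintype n]
    [DecidableEq n] {A : Matrix n n ℝ} (hA : A.PosSemidef) : hA.sqrt * hA.sqrt = A := by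
  have hs := hA.1.spectral_theorem
  rw [Unitary.conjStarAlgAut_apply] at hs
  have hu : (star hA.1.eigenvectorUnitary : Matrix n n ℝ) * hA.1.eigenvectorUnitary.1 = 1 :=
    Unitary.coe_star_mul_self _
  unfold Matrix.PosSemidef.sqrt
  conv_rhs => rw [hs]
  rw [show ∀ a b c d e f : Matrix n n ℝ, a * b * c * (d * e * f) = a * (b * (c * d) * e) * f by
    intros; simp only [Matrix.mul_assoc], hu, Matrix.mul_one, Matrix.diagonal_mul_diagonal]
  congr 3
  funext i
  simp [Real.mul_self_sqrt (hA.eigenvalues_nonneg i)]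

lemma Matrix.PosSemidef.sqrt_isHermitian {n : Type*} [Fintype n]
    [DecidableEq n] {A : Matrix n n ℝ} (hA : A.PosSemidef) : hA.sqrtᴴ = hA.sqrt := by
  unfold Matrix.PosSemidef.sqrt
  rw [Matrix.conjTranspose_mul, Matrix.conjTranspose_mul, Matrix.diagonal_conjTranspose]
  simp only [Matrix.star_eq_conjTranspose, Matrix.conjTranspose_conjTranspose, Matrix.mul_assoc]
  congr 2

lemma aux_eval_charpoly {n : Type*} [Fintype n] [DecidableEq n] (M : Matrix n n ℝ) (x : ℝ) :
    M.charpoly.eval x = (Matrix.diagonal (fun _ => x) - M).det := by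
  have : M.charpoly.eval x = (Polynomial.evalRingHom x) M.charpoly := rfl
  rw [this, Matrix.charpoly, RingHom.map_det]
  congr 1
  ext i j
  by_cases h : i = j <;>
    simp [h, Matrix.charmatrix_apply, Matrix.diagonal_apply, RingHom.mapMatrix_apply]

lemma aux_charpoly_conj {n : Type*} [Fintype n] [DecidableEq n] (V : Matrix n n ℝ)
    (hV : Vᵀ * V = 1) (d : n → ℝ) :
    (V * Matrix.diagonal d * Vᵀ).charpoly = ∏ k, (X - C (d k)) := by
  have hVVt : V * Vᵀ = 1 := mul_eq_one_comm.mp hV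
  have hdet : V.det * Vᵀ.det = 1 := by
    rw [← Matrix.det_mul, hVVt, Matrix.det_one]
  apply Polynomial.funext
  intro x
  rw [aux_eval_charpoly]
  have key : Matrix.diagonal (fun _ => x) - V * Matrix.diagonal d * Vᵀ
      = V * (Matrix.diagonal (fun k => x - d k)) * Vᵀ := by
    have h1 : (Matrix.diagonal (fun _ => x) : Matrix n n ℝ)
        = V * Matrix.diagonal (fun _ => x) * Vᵀ := by
      have : (Matrix.diagonal (fun _ => x) : Matrix n n ℝ) = x • (1 : Matrix n n ℝ) := by
        ext i j; by_cases h : i = j <;> simp [h, Matrix.diagonal_apply, Matrix.one_apply]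
      rw [this]
      rw [Matrix.mul_smul, Matrix.mul_one, Matrix.smul_mul, hVVt]
    rw [← Matrix.diagonal_sub]
    rw [Matrix.mul_sub, Matrix.sub_mul, ← h1]
  rw [key, Matrix.det_mul, Matrix.det_mul, Matrix.det_diagonal]
  rw [Polynomial.eval_prod]
  simp only [Polynomial.eval_sub, Polynomial.eval_X, Polynomial.eval_C]
  rw [mul_right_comm, hdet, one_mul]

lemma aux_diag_smul {p : Type*} [Fintype p] [DecidableEq p] (x : ℝ) (hx : x ≠ 0)
    (P : Matrix p p ℝ) :
    Matrix.diagonal (fun _ => x) - P = x • (1 + (-x⁻¹) • P) := by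
  rw [smul_add, smul_smul, mul_neg, mul_inv_cancel₀ hx]
  ext i j
  by_cases hij : i = j <;>
    simp [hij, Matrix.diagonal_apply, Matrix.one_apply, sub_eq_add_neg]

lemma aux_charpoly_rect {m n : Type*} [Fintype m] [DecidableEq m] [Fintype n] [DecidableEq n]
    (A : Matrix m n ℝ) (B : Matrix n m ℝ) (h : Fintype.card m ≤ Fintype.card n) :
    (B * A).charpoly = X ^ (Fintype.card n - Fintype.card m) * (A * B).charpoly := by
  apply Polynomial.eq_of_infinite_eval_eq
  apply Set.Infinite.mono (s := {x : ℝ | x ≠ 0})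
  · intro x hx
    simp only [Set.mem_setOf_eq] at hx ⊢
    rw [aux_eval_charpoly, Polynomial.eval_mul, Polynomial.eval_pow, Polynomial.eval_X,
      aux_eval_charpoly]
    rw [aux_diag_smul x hx (B * A), aux_diag_smul x hx (A * B),
      Matrix.det_smul, Matrix.det_smul]
    have hcomm : (1 + (-x⁻¹) • (B * A)).det = (1 + (-x⁻¹) • (A * B)).det := by
      have h1 : (-x⁻¹) • (B * A) = ((-x⁻¹) • B) * A := by rw [Matrix.smul_mul]
      have h2 : (-x⁻¹) • (A * B) = A * ((-x⁻¹) • B) := by rw [Matrix.mul_smul]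
      rw [h1, h2, Matrix.det_one_add_mul_comm]
    rw [hcomm, ← mul_assoc, ← pow_add]
    congr 2
    omega
  · exact Set.Infinite.mono (fun x (hx : x ∈ Set.Ioi (0:ℝ)) => ne_of_gt hx)
      (Set.Ioi_infinite 0)

/-- Under the spectral-folding setup with |L| = |S| = s ≤ |Sᶜ|, the s nonzero
singular values of A = Q_S^{−1/2} M_{SSᶜ} Q_{Sᶜ}^{−1/2} are exactly 1 − λ_k for
k ∈ L, counted with multiplicity (the characteristic polynomial of A Aᵀ is
∏_{k ∈ L} (X − (1 − λ_k)²)); in particular the smallest of the values 1 − λ_k,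
k ∈ L, i.e. the s-th largest singular value, equals 1 − λ_s. -/
theorem singular_values_of_normalized_cross_block
    {N s : ℕ} (hN : 1 ≤ N) (hs : 0 < s) (hsN : s ≤ N)
    (M : Matrix (Fin N) (Fin N) ℝ) (hM : M.PosSemidef)
    (S : Finset (Fin N)) (hsS : s = S.card)
    (J : Matrix (Fin N) (Fin N) ℝ)
    (hJ : J = Matrix.diagonal (fun i => if i ∈ S then (1 : ℝ) else -1))
    (Q : Matrix (Fin N) (Fin N) ℝ)
    (hQ : ∀ i j, Q i j =
      if (i ∈ S ∧ j ∈ S) ∨ (i ∉ S ∧ j ∉ S) then M i j else 0)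
    (hQpd : Q.PosDef)
    (lam : Fin N → ℝ) (hlam : Monotone lam)
    (U : Matrix (Fin N) (Fin N) ℝ)
    (hUQU : Uᵀ * Q * U = 1)
    (hMU : M * U = Q * U * Matrix.diagonal lam)
    (hfold : ∀ k : Fin N, (fun i => U i k.rev) = J.mulVec (fun i => U i k))
    (hcardL : Fintype.card {k : Fin N // lam k < 1} = s)
    (hsSc : s ≤ Fintype.card {i : Fin N // i ∉ S})
    (QS : Matrix {i : Fin N // i ∈ S} {i : Fin N // i ∈ S} ℝ)
    (hQS : QS = M.submatrix Subtype.val Subtype.val)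
    (hQSpd : QS.PosSemidef)
    (QSc : Matrix {i : Fin N // i ∉ S} {i : Fin N // i ∉ S} ℝ)
    (hQSc : QSc = M.submatrix Subtype.val Subtype.val)
    (hQScpd : QSc.PosSemidef)
    (A : Matrix {i : Fin N // i ∈ S} {i : Fin N // i ∉ S} ℝ)
    (hA : A = hQSpd.sqrt⁻¹ *
      M.submatrix (Subtype.val : {i : Fin N // i ∈ S} → Fin N)
        (Subtype.val : {i : Fin N // i ∉ S} → Fin N) * hQScpd.sqrt⁻¹) :
    (A * Aᵀ).charpoly =
        ∏ k ∈ Finset.univ.filter (fun k : Fin N => lam k < 1),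
          (X - C ((1 - lam k) ^ 2)) ∧
      IsLeast {x : ℝ | ∃ k : Fin N, lam k < 1 ∧ x = 1 - lam k}
        (1 - lam ⟨s - 1, by omega⟩) := by
  classical
  -- basic determinants
  have hQdet : IsUnit Q.det := isUnit_iff_ne_zero.mpr (ne_of_gt hQpd.det_pos)
  have hdetU : U.det ≠ 0 := by
    have h := congrArg Matrix.det hUQU
    rw [Matrix.det_mul, Matrix.det_mul, Matrix.det_transpose, Matrix.det_one] at h
    intro h0; rw [h0] at h; simp at h
  -- column eigenvector equations
  have hcol : ∀ k : Fin N, M *ᵥ (fun i => U i k) = lam k • (Q *ᵥ (fun i => U i k)) := by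
    intro k; funext i
    have h0 : (M * U) i k = (Q * U) i k * lam k := by rw [hMU, Matrix.mul_diagonal]
    simp only [Matrix.mul_apply] at h0
    simp only [Matrix.mulVec, dotProduct, Pi.smul_apply, smul_eq_mul]
    rw [h0]; ring
  -- J identities
  have hQJ : Q * J = J * Q := by
    ext i j
    rw [hJ, Matrix.mul_diagonal, Matrix.diagonal_mul, hQ i j]
    by_cases hi : i ∈ S <;> by_cases hj : j ∈ S <;> simp [hi, hj]
  have hMJ : M * J = (2:ℝ) • (Q * J) - J * M := by
    ext i j
    simp only [Matrix.sub_apply, Matrix.smul_apply, smul_eq_mul]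
    rw [hJ, Matrix.mul_diagonal, Matrix.mul_diagonal, Matrix.diagonal_mul, hQ i j]
    by_cases hi : i ∈ S <;> by_cases hj : j ∈ S <;> simp [hi, hj] <;> ring
  -- folding of eigenvalues
  have hrev : ∀ k : Fin N, lam k.rev = 2 - lam k := by
    intro k
    have hv : (fun i => U i k.rev) = J *ᵥ (fun i => U i k) := hfold k
    have h1 : M *ᵥ (fun i => U i k.rev) = lam k.rev • (Q *ᵥ (fun i => U i k.rev)) := hcol k.rev
    have h2 : M *ᵥ (fun i => U i k.rev) = (2 - lam k) • (Q *ᵥ (fun i => U i k.rev)) := by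
      rw [hv, Matrix.mulVec_mulVec, Matrix.mulVec_mulVec, hMJ, Matrix.sub_mulVec,
        Matrix.smul_mulVec, ← Matrix.mulVec_mulVec _ J M, hcol k, Matrix.mulVec_smul,
        Matrix.mulVec_mulVec, ← hQJ, ← sub_smul]
    have hvne : (fun i => U i k.rev) ≠ (0 : Fin N → ℝ) := by
      intro h0
      apply hdetU
      apply Matrix.det_eq_zero_of_column_eq_zero k.rev
      intro i; exact congrFun h0 i
    have hQv : Q *ᵥ (fun i => U i k.rev) ≠ 0 := by
      intro h0
      apply hvne
      have h5 : Q⁻¹ *ᵥ (Q *ᵥ (fun i => U i k.rev)) = (fun i => U i k.rev) := by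
        rw [Matrix.mulVec_mulVec, Matrix.nonsing_inv_mul Q hQdet, Matrix.one_mulVec]
      rw [h0] at h5; simpa [Matrix.mulVec_zero] using h5.symm
    have h3 : (lam k.rev - (2 - lam k)) • (Q *ᵥ (fun i => U i k.rev)) = 0 := by
      rw [sub_smul, ← h1, ← h2, sub_self]
    rcases smul_eq_zero.mp h3 with h | h
    · linarith [sub_eq_zero.mp h]
    · exact absurd h hQv
  -- reindexing setup
  have hMsym : Mᵀ = M := by
    rw [← Matrix.conjTranspose_eq_transpose_of_trivial]; exact hM.1
  set e : ({i : Fin N // i ∈ S} ⊕ {i : Fin N // i ∉ S}) ≃ Fin N :=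
    Equiv.sumCompl (fun i => i ∈ S) with he
  set GS : Matrix {i : Fin N // i ∈ S} {i : Fin N // i ∈ S} ℝ := hQSpd.sqrt with hGSdef
  set GSc : Matrix {i : Fin N // i ∉ S} {i : Fin N // i ∉ S} ℝ := hQScpd.sqrt with hGScdef
  set Mx : Matrix {i : Fin N // i ∈ S} {i : Fin N // i ∉ S} ℝ :=
    M.submatrix Subtype.val Subtype.val with hMx
  have hM' : Matrix.reindex e.symm e.symm M = Matrix.fromBlocks QS Mx Mxᵀ QSc := by
    ext x y
    cases x with
    | inl a => cases y with
      | inl b => simp [Matrix.reindex_apply, hQS, hMx, he]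
      | inr b => simp [Matrix.reindex_apply, hMx, he]
    | inr a => cases y with
      | inl b =>
        simp only [Matrix.reindex_apply, Matrix.submatrix_apply, Equiv.symm_symm, he,
          Equiv.sumCompl_apply_inr, Equiv.sumCompl_apply_inl, Matrix.fromBlocks_apply₂₁,
          Matrix.transpose_apply, hMx]
        conv_lhs => rw [← hMsym]
        rw [Matrix.transpose_apply]
      | inr b => simp [Matrix.reindex_apply, hQSc, hMx, he]
  have hQ' : Matrix.reindex e.symm e.symm Q = Matrix.fromBlocks QS 0 0 QSc := by
    ext x y
    cases x with
    | inl a => cases y with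
      | inl b =>
        simp only [Matrix.reindex_apply, Matrix.submatrix_apply, Equiv.symm_symm, he,
          Equiv.sumCompl_apply_inl, Matrix.fromBlocks_apply₁₁]
        rw [hQ, hQS, if_pos (Or.inl ⟨a.2, b.2⟩)]; rfl
      | inr b =>
        simp only [Matrix.reindex_apply, Matrix.submatrix_apply, Equiv.symm_symm, he,
          Equiv.sumCompl_apply_inl, Equiv.sumCompl_apply_inr, Matrix.fromBlocks_apply₁₂,
          Matrix.zero_apply]
        rw [hQ]
        exact if_neg (by push_neg; exact ⟨fun _ => b.2, fun h => absurd a.2 h⟩)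
    | inr a => cases y with
      | inl b =>
        simp only [Matrix.reindex_apply, Matrix.submatrix_apply, Equiv.symm_symm, he,
          Equiv.sumCompl_apply_inl, Equiv.sumCompl_apply_inr, Matrix.fromBlocks_apply₂₁,
          Matrix.zero_apply]
        rw [hQ]
        exact if_neg (by push_neg; exact ⟨fun h => absurd h a.2, fun _ => b.2⟩)
      | inr b =>
        simp only [Matrix.reindex_apply, Matrix.submatrix_apply, Equiv.symm_symm, he,
          Equiv.sumCompl_apply_inr, Matrix.fromBlocks_apply₂₂]
        rw [hQ, hQSc, if_pos (Or.inr ⟨a.2, b.2⟩)]; rfl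
  -- determinants of the diagonal blocks
  have hQdetsplit : Q.det = QS.det * QSc.det := by
    rw [← Matrix.det_reindex_self e.symm Q, hQ', Matrix.det_fromBlocks_zero₂₁]
  have hQSdet : QS.det ≠ 0 := by
    intro h0; rw [h0, zero_mul] at hQdetsplit
    exact (ne_of_gt hQpd.det_pos) hQdetsplit
  have hQScdet : QSc.det ≠ 0 := by
    intro h0; rw [h0, mul_zero] at hQdetsplit
    exact (ne_of_gt hQpd.det_pos) hQdetsplit
  -- square roots of the blocks
  have hGS2 : GS * GS = QS := hQSpd.sqrt_mul_self
  have hGSc2 : GSc * GSc = QSc := hQScpd.sqrt_mul_self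
  have hGSdet : GS.det ≠ 0 := by
    intro h0
    apply hQSdet
    rw [← hGS2, Matrix.det_mul, h0, zero_mul]
  have hGScdet : GSc.det ≠ 0 := by
    intro h0
    apply hQScdet
    rw [← hGSc2, Matrix.det_mul, h0, zero_mul]
  have hGSsym : GSᵀ = GS := by
    rw [← Matrix.conjTranspose_eq_transpose_of_trivial]; exact hQSpd.sqrt_isHermitian
  have hGScsym : GScᵀ = GSc := by
    rw [← Matrix.conjTranspose_eq_transpose_of_trivial]; exact hQScpd.sqrt_isHermitian
  have hGSl : GS⁻¹ * GS = 1 := Matrix.nonsing_inv_mul _ (isUnit_iff_ne_zero.mpr hGSdet)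
  have hGSr : GS * GS⁻¹ = 1 := Matrix.mul_nonsing_inv _ (isUnit_iff_ne_zero.mpr hGSdet)
  have hGScl : GSc⁻¹ * GSc = 1 := Matrix.nonsing_inv_mul _ (isUnit_iff_ne_zero.mpr hGScdet)
  have hGScr : GSc * GSc⁻¹ = 1 := Matrix.mul_nonsing_inv _ (isUnit_iff_ne_zero.mpr hGScdet)
  -- the global square root
  set W : Matrix ({i : Fin N // i ∈ S} ⊕ {i : Fin N // i ∉ S})
      ({i : Fin N // i ∈ S} ⊕ {i : Fin N // i ∉ S}) ℝ :=
    Matrix.fromBlocks GS 0 0 GSc with hWdef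
  have hWW : W * W = Matrix.fromBlocks QS 0 0 QSc := by
    rw [hWdef, Matrix.fromBlocks_multiply]
    simp [hGS2, hGSc2]
  set G : Matrix (Fin N) (Fin N) ℝ := Matrix.reindex e e W with hGdef
  have hreindexmul : ∀ (X Y : Matrix (Fin N) (Fin N) ℝ),
      Matrix.reindex e.symm e.symm (X * Y)
        = Matrix.reindex e.symm e.symm X * Matrix.reindex e.symm e.symm Y := by
    intro X Y
    simp only [Matrix.reindex_apply]
    rw [Matrix.submatrix_mul_equiv]
  have hGW : Matrix.reindex e.symm e.symm G = W := by
    rw [hGdef]; simp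
  have hGG : G * G = Q := by
    have h := hreindexmul G G
    rw [hGW, hWW, ← hQ'] at h
    have h2 := congrArg (Matrix.reindex e e) h
    simpa using h2
  have hGdet : G.det ≠ 0 := by
    rw [hGdef, Matrix.det_reindex_self, hWdef, Matrix.det_fromBlocks_zero₂₁]
    exact mul_ne_zero hGSdet hGScdet
  have hGunit : IsUnit G.det := isUnit_iff_ne_zero.mpr hGdet
  have hGsym : Gᵀ = G := by
    rw [hGdef, Matrix.transpose_reindex, hWdef, Matrix.fromBlocks_transpose]
    simp [hGSsym, hGScsym]
  have hWinv : W⁻¹ = Matrix.fromBlocks GS⁻¹ 0 0 GSc⁻¹ := by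
    apply Matrix.inv_eq_left_inv
    rw [hWdef, Matrix.fromBlocks_multiply]
    simp only [Matrix.mul_zero, Matrix.zero_mul, add_zero, zero_add, hGSl, hGScl]
    exact Matrix.fromBlocks_one
  have hGinv' : Matrix.reindex e.symm e.symm G⁻¹ = W⁻¹ := by
    rw [hGdef, Matrix.inv_reindex]; simp
  -- block structure of B - 1
  set B : Matrix (Fin N) (Fin N) ℝ := G⁻¹ * M * G⁻¹ with hBdef
  have hBblk : Matrix.reindex e.symm e.symm B = Matrix.fromBlocks 1 A Aᵀ 1 := by
    have e11 : GS⁻¹ * QS * GS⁻¹ = 1 := by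
      rw [← hGS2, ← Matrix.mul_assoc, Matrix.mul_assoc _ _ GS⁻¹, hGSr,
        Matrix.mul_one, hGSl]
    have e22 : GSc⁻¹ * QSc * GSc⁻¹ = 1 := by
      rw [← hGSc2, ← Matrix.mul_assoc, Matrix.mul_assoc _ _ GSc⁻¹, hGScr,
        Matrix.mul_one, hGScl]
    have e21 : GSc⁻¹ * Mxᵀ * GS⁻¹ = Aᵀ := by
      rw [hA, Matrix.transpose_mul, Matrix.transpose_mul, Matrix.transpose_nonsing_inv,
        Matrix.transpose_nonsing_inv, hGSsym, hGScsym, Matrix.mul_assoc]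
    rw [hBdef, hreindexmul, hreindexmul, hGinv', hM', hWinv, Matrix.fromBlocks_multiply,
      Matrix.fromBlocks_multiply]
    simp only [Matrix.mul_zero, Matrix.zero_mul, add_zero, zero_add]
    rw [Matrix.mul_assoc GS⁻¹ QS, ← Matrix.mul_assoc, e11,
      Matrix.mul_assoc GSc⁻¹ QSc, ← Matrix.mul_assoc, e22, e21]
    congr 1
    rw [hA, hMx]
  -- spectral decomposition of B
  have hUunit : IsUnit U.det := isUnit_iff_ne_zero.mpr hdetU
  set V : Matrix (Fin N) (Fin N) ℝ := G * U with hVdef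
  have hVorth : Vᵀ * V = 1 := by
    rw [hVdef, Matrix.transpose_mul, hGsym]
    calc Uᵀ * G * (G * U) = Uᵀ * (G * G) * U := by
          rw [Matrix.mul_assoc, Matrix.mul_assoc, Matrix.mul_assoc]
      _ = 1 := by rw [hGG]; exact hUQU
  have hVinv : V⁻¹ = Vᵀ := Matrix.inv_eq_left_inv hVorth
  have hGl : G⁻¹ * G = 1 := Matrix.nonsing_inv_mul _ hGunit
  have hGr : G * G⁻¹ = 1 := Matrix.mul_nonsing_inv _ hGunit
  have hB : B = V * Matrix.diagonal lam * Vᵀ := by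
    have hMdec : M = Q * U * Matrix.diagonal lam * U⁻¹ := by
      rw [← hMU, Matrix.mul_nonsing_inv_cancel_right _ _ hUunit]
    have hGiQ : G⁻¹ * Q = G := by
      rw [← hGG, ← Matrix.mul_assoc, hGl, Matrix.one_mul]
    rw [hBdef, hMdec, ← hVinv, Matrix.mul_inv_rev, hVdef]
    calc G⁻¹ * (Q * U * Matrix.diagonal lam * U⁻¹) * G⁻¹
        = (G⁻¹ * Q) * U * Matrix.diagonal lam * (U⁻¹ * G⁻¹) := by
          simp only [Matrix.mul_assoc]
      _ = G * U * Matrix.diagonal lam * (U⁻¹ * G⁻¹) := by rw [hGiQ]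
  have hB1 : B - 1 = V * Matrix.diagonal (fun k => lam k - 1) * Vᵀ := by
    have h1 : Matrix.diagonal (fun k => lam k - 1)
        = Matrix.diagonal lam - 1 := by
      rw [← Matrix.diagonal_one, Matrix.diagonal_sub]
    rw [h1, Matrix.mul_sub, Matrix.sub_mul, Matrix.mul_one, ← hB,
      mul_eq_one_comm.mp hVorth]
  have hB1sq : (B - 1) * (B - 1)
      = V * Matrix.diagonal (fun k => (lam k - 1)^2) * Vᵀ := by
    rw [hB1]
    calc V * Matrix.diagonal (fun k => lam k - 1) * Vᵀ
          * (V * Matrix.diagonal (fun k => lam k - 1) * Vᵀ)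
        = V * Matrix.diagonal (fun k => lam k - 1) * (Vᵀ * V)
          * Matrix.diagonal (fun k => lam k - 1) * Vᵀ := by
          simp only [Matrix.mul_assoc]
      _ = V * (Matrix.diagonal (fun k => lam k - 1)
          * Matrix.diagonal (fun k => lam k - 1)) * Vᵀ := by
          rw [hVorth, Matrix.mul_one]
          simp only [Matrix.mul_assoc]
      _ = V * Matrix.diagonal (fun k => (lam k - 1)^2) * Vᵀ := by
          rw [Matrix.diagonal_mul_diagonal]
          congr 1
          ext k
          simp [sq]
  -- charpoly of the squared off-diagonal block
  have hKsq : Matrix.reindex e.symm e.symm ((B - 1) * (B - 1))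
      = Matrix.fromBlocks (A * Aᵀ) 0 0 (Aᵀ * A) := by
    have hB1' : Matrix.reindex e.symm e.symm (B - 1)
        = Matrix.fromBlocks 0 A Aᵀ 0 := by
      have hsub : Matrix.reindex e.symm e.symm (B - 1)
          = Matrix.reindex e.symm e.symm B - Matrix.reindex e.symm e.symm 1 := by
        simp [Matrix.reindex_apply, Matrix.submatrix_sub]
      rw [hsub, hBblk]
      have h1 : (Matrix.reindex e.symm e.symm (1 : Matrix (Fin N) (Fin N) ℝ))
          = (1 : Matrix _ _ ℝ) := by
        simp [Matrix.reindex_apply, Matrix.submatrix_one_equiv]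
      rw [h1]
      ext x y
      cases x <;> cases y <;>
        simp [Matrix.fromBlocks, Matrix.one_apply, Sum.elim_inl, Sum.elim_inr]
    rw [hreindexmul, hB1', Matrix.fromBlocks_multiply]
    simp
  have main1 : (A * Aᵀ).charpoly * (Aᵀ * A).charpoly
      = ∏ k : Fin N, (X - C ((lam k - 1)^2)) := by
    have h1 : (Matrix.fromBlocks (A * Aᵀ) (0 : Matrix _ _ ℝ) 0 (Aᵀ * A)).charpoly
        = (A * Aᵀ).charpoly * (Aᵀ * A).charpoly :=
      Matrix.charpoly_fromBlocks_zero₁₂ _ _ _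
    rw [← h1, ← hKsq]
    have h2 := Matrix.charpoly_reindex (R := ℝ) e.symm ((B - 1) * (B - 1))
    rw [h2, hB1sq, aux_charpoly_conj V hVorth]
  -- cardinalities
  have hcardS : Fintype.card {i : Fin N // i ∈ S} = s := by
    rw [Fintype.card_coe]; omega
  have hcardSc : Fintype.card {i : Fin N // i ∉ S} = N - s := by
    rw [Fintype.card_subtype_compl, hcardS, Fintype.card_fin]
  have hsle : 2 * s ≤ N := by
    rw [hcardSc] at hsSc; omega
  have main2 : (Aᵀ * A).charpoly = X ^ (N - 2*s) * (A * Aᵀ).charpoly := by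
    have h := aux_charpoly_rect A Aᵀ (by rw [hcardS, hcardSc]; omega)
    rw [hcardS, hcardSc] at h
    have : N - s - s = N - 2*s := by omega
    rwa [this] at h
  -- eigenvalue product split
  set T1 : Finset (Fin N) := Finset.univ.filter (fun k : Fin N => lam k < 1) with hT1def
  have hT1card : T1.card = s := by
    rw [hT1def, ← Fintype.card_subtype]; exact hcardL
  set q : Polynomial ℝ := ∏ k ∈ T1, (X - C ((1 - lam k) ^ 2)) with hqdef
  have hprod1 : ∏ k ∈ T1, (X - C ((lam k - 1)^2)) = q := by
    rw [hqdef]; apply Finset.prod_congr rfl; intro k _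
    rw [show (lam k - 1)^2 = (1 - lam k)^2 by ring]
  set T2 : Finset (Fin N) := Finset.univ.filter (fun k : Fin N => 1 < lam k) with hT2def
  have hT2 : T2 = T1.image Fin.rev := by
    ext k
    simp only [hT2def, hT1def, Finset.mem_filter, Finset.mem_univ, true_and,
      Finset.mem_image]
    constructor
    · intro h
      exact ⟨k.rev, by rw [hrev k]; linarith, Fin.rev_rev k⟩
    · rintro ⟨j, hj, rfl⟩
      rw [hrev j]; linarith
  have hT2card : T2.card = s := by
    rw [hT2, Finset.card_image_of_injective _ Fin.rev_injective, hT1card]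
  have hprod2 : ∏ k ∈ T2, (X - C ((lam k - 1)^2)) = q := by
    rw [hT2, Finset.prod_image (fun x _ y _ h => Fin.rev_injective h), hqdef]
    apply Finset.prod_congr rfl; intro k _
    rw [hrev k, show (2 - lam k - 1)^2 = (1 - lam k)^2 by ring]
  have hsplitall : ∏ k : Fin N, (X - C ((lam k - 1)^2))
      = q * (q * X ^ (N - 2*s)) := by
    rw [← Finset.prod_filter_mul_prod_filter_not Finset.univ (fun k : Fin N => lam k < 1)
      (fun k => X - C ((lam k - 1)^2)), ← hT1def, hprod1]
    congr 1
    rw [← Finset.prod_filter_mul_prod_filter_not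
      (Finset.univ.filter (fun k : Fin N => ¬ lam k < 1)) (fun k : Fin N => 1 < lam k)
      (fun k => X - C ((lam k - 1)^2))]
    have hff1 : (Finset.univ.filter (fun k : Fin N => ¬ lam k < 1)).filter
        (fun k : Fin N => 1 < lam k) = T2 := by
      rw [Finset.filter_filter, hT2def]
      apply Finset.filter_congr
      intro k _
      constructor
      · rintro ⟨_, h⟩; exact h
      · intro h; exact ⟨by linarith, h⟩
    have hmid : ∀ k ∈ (Finset.univ.filter (fun k : Fin N => ¬ lam k < 1)).filter
        (fun k : Fin N => ¬ 1 < lam k), X - C ((lam k - 1)^2) = X := by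
      intro k hk
      simp only [Finset.mem_filter] at hk
      have h1 : lam k = 1 := le_antisymm (not_lt.mp hk.2) (not_lt.mp hk.1.2)
      rw [h1]; simp
    rw [hff1, hprod2, Finset.prod_congr rfl hmid, Finset.prod_const]
    have c1 := Finset.card_filter_add_card_filter_not
      (s := (Finset.univ : Finset (Fin N))) (fun k : Fin N => lam k < 1)
    have c2 := Finset.card_filter_add_card_filter_not
      (s := Finset.univ.filter (fun k : Fin N => ¬ lam k < 1)) (fun k : Fin N => 1 < lam k)
    rw [hff1] at c2
    rw [← hT1def] at c1
    rw [hT1card] at c1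
    rw [hT2card] at c2
    rw [Finset.card_univ, Fintype.card_fin] at c1
    have hcard3 : (Finset.filter (fun k : Fin N => ¬1 < lam k)
        (Finset.filter (fun k : Fin N => ¬lam k < 1) Finset.univ)).card = N - 2*s := by
      omega
    rw [hcard3]
  -- putting it together
  set p : Polynomial ℝ := (A * Aᵀ).charpoly with hpdef
  have hpq : p * (X ^ (N - 2*s) * p) = q * (q * X ^ (N - 2*s)) := by
    rw [hpdef, ← main2, main1, hsplitall]
  have hp2q2 : p * p = q * q := by
    have hX : (X : Polynomial ℝ) ^ (N - 2*s) ≠ 0 := pow_ne_zero _ Polynomial.X_ne_zero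
    apply mul_left_cancel₀ hX
    calc X ^ (N - 2*s) * (p * p) = p * (X ^ (N - 2*s) * p) := by ring
      _ = q * (q * X ^ (N - 2*s)) := hpq
      _ = X ^ (N - 2*s) * (q * q) := by ring
  have hpm : p.Monic := Matrix.charpoly_monic _
  have hqm : q.Monic :=
    Polynomial.monic_prod_of_monic _ _ (fun i _ => Polynomial.monic_X_sub_C _)
  have hpq' : p = q := by
    have hzero : (p - q) * (p + q) = 0 := by linear_combination hp2q2
    rcases mul_eq_zero.mp hzero with h | h
    · exact sub_eq_zero.mp h
    · exfalso
      have hpq2 : p = -q := eq_neg_of_add_eq_zero_left h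
      have hl := hpm.leadingCoeff
      rw [hpq2, Polynomial.leadingCoeff_neg, hqm.leadingCoeff] at hl
      norm_num at hl
  -- the index characterization
  have hmem : ∀ k : Fin N, lam k < 1 ↔ (k : ℕ) < s := by
    intro k
    constructor
    · intro hk
      by_contra hks
      push_neg at hks
      have hsub : Finset.Iic k ⊆ T1 := by
        intro j hj
        rw [Finset.mem_Iic] at hj
        rw [hT1def, Finset.mem_filter]
        exact ⟨Finset.mem_univ _, lt_of_le_of_lt (hlam hj) hk⟩
      have hc := Finset.card_le_card hsub
      rw [Fin.card_Iic, hT1card] at hc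
      omega
    · intro hk
      by_contra hk1
      push_neg at hk1
      have hsub : T1 ⊆ Finset.Iio k := by
        intro j hj
        rw [hT1def, Finset.mem_filter] at hj
        rw [Finset.mem_Iio]
        by_contra hjk
        push_neg at hjk
        exact absurd (lt_of_lt_of_le hj.2 (le_trans hk1 (hlam hjk))) (lt_irrefl _)
      have hc := Finset.card_le_card hsub
      rw [Fin.card_Iio, hT1card] at hc
      omega
  constructor
  · exact hpq'
  · constructor
    · refine ⟨⟨s-1, by omega⟩, ?_, rfl⟩
      exact (hmem _).mpr (by simp; omega)
    · rintro x ⟨k, hk, rfl⟩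
      have hks : (k : ℕ) < s := (hmem k).mp hk
      have hle : lam k ≤ lam ⟨s-1, by omega⟩ := by
        apply hlam
        rw [Fin.le_def]
        simp only []
        omega
      linarith
end

section
/- Let M be a real symmetric positive semidefinite N×N matrix, S ⊆ {1,…,N} with complement Sᶜ, and Q the block-diagonal part of M with respect to (S, Sᶜ), assumed positive definite. Let r = rank(M_{SSᶜ}). Then the generalized eigenvalues of (M, Q), counted with multiplicity, contain exactly r values strictly less than 1, exactly r values strictly greater than 1, and exactly N − 2r values equal to 1. In particular, if M_{SSᶜ} has full row rank r = |S| ≤ |Sᶜ|, then the low-frequency subspace span{u_k : λ_k < 1} and the high-frequency subspace span{u_k : λ_k > 1} each have dimension |S|, and the middle subspace span{u_k : λ_k = 1} has dimension |Sᶜ| − |S|. -/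
open Matrix

open Polynomial Finset in
lemma myRangeProdMap {R V₁ V₂ V₃ V₄ : Type*} [CommRing R]
    [AddCommGroup V₁] [AddCommGroup V₂] [AddCommGroup V₃] [AddCommGroup V₄]
    [Module R V₁] [Module R V₂] [Module R V₃] [Module R V₄]
    (f : V₁ →ₗ[R] V₂) (g : V₃ →ₗ[R] V₄) :
    LinearMap.range (f.prodMap g) = (LinearMap.range f).prod (LinearMap.range g) := by
  ext ⟨x, y⟩
  simp only [LinearMap.mem_range, Submodule.mem_prod, Prod.ext_iff]
  constructor
  · rintro ⟨⟨a, b⟩, h1, h2⟩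
    exact ⟨⟨a, h1⟩, ⟨b, h2⟩⟩
  · rintro ⟨⟨a, ha⟩, ⟨b, hb⟩⟩
    exact ⟨⟨a, b⟩, ha, hb⟩

lemma myFinrankProd {V W : Type*} [AddCommGroup V] [AddCommGroup W]
    [Module ℝ V] [Module ℝ W] [FiniteDimensional ℝ V] [FiniteDimensional ℝ W]
    (p : Submodule ℝ V) (q : Submodule ℝ W) :
    Module.finrank ℝ (p.prod q) = Module.finrank ℝ p + Module.finrank ℝ q := by
  have e : ↥(p.prod q) ≃ₗ[ℝ] ↥p × ↥q :=
    { toFun := fun x => (⟨x.1.1, x.2.1⟩, ⟨x.1.2, x.2.2⟩)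
      invFun := fun y => ⟨(y.1.1, y.2.1), ⟨y.1.2, y.2.2⟩⟩
      map_add' := fun _ _ => rfl
      map_smul' := fun _ _ => rfl
      left_inv := fun _ => rfl
      right_inv := fun _ => rfl }
  rw [e.finrank_eq, Module.finrank_prod]

lemma myRankFromBlocks {α β : Type*} [Fintype α] [Fintype β] [DecidableEq α] [DecidableEq β]
    (B : Matrix α β ℝ) :
    (fromBlocks 0 B Bᵀ 0).rank = B.rank + Bᵀ.rank := by
  classical
  let e := LinearEquiv.sumArrowLequivProdArrow α β ℝ ℝ
  let sw := LinearEquiv.prodComm ℝ (α → ℝ) (β → ℝ)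
  have key : (fromBlocks (0 : Matrix α α ℝ) B Bᵀ 0).mulVecLin
      = e.symm.toLinearMap ∘ₗ (LinearMap.prodMap B.mulVecLin Bᵀ.mulVecLin)
        ∘ₗ (sw.toLinearMap ∘ₗ e.toLinearMap) := by
    apply LinearMap.ext; intro v
    have hv : v = Sum.elim (v ∘ Sum.inl) (v ∘ Sum.inr) := (Sum.elim_comp_inl_inr v).symm
    conv_lhs => rw [mulVecLin_apply, hv, fromBlocks_mulVec]
    funext i
    cases i <;>
      simp [e, sw, LinearEquiv.sumArrowLequivProdArrow, Equiv.sumArrowEquivProdArrow,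
        Matrix.mulVec_transpose]
  rw [Matrix.rank, key, LinearMap.range_comp, LinearMap.range_comp]
  have hre : LinearMap.range ((sw : (α → ℝ) × (β → ℝ) →ₗ[ℝ] (β → ℝ) × (α → ℝ)) ∘ₗ (e : (α ⊕ β → ℝ) →ₗ[ℝ] (α → ℝ) × (β → ℝ))) = ⊤ :=
    LinearMap.range_eq_top.mpr ((sw.surjective).comp e.surjective)
  rw [hre, Submodule.map_top, myRangeProdMap, LinearEquiv.finrank_map_eq, myFinrankProd]
  rfl

/-- Let r = rank(M_{SSᶜ}). Among the generalized eigenvalues of (M, Q(S))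
(counted with multiplicity, encoded via a Q-orthonormal generalized
eigendecomposition M U = Q U Λ, Uᵀ Q U = I), exactly r are < 1, exactly r are
> 1, and exactly N − 2r are = 1. In particular, if M_{SSᶜ} has full row rank
r = |S| ≤ |Sᶜ|, the low- and high-frequency subspaces each have dimension |S|
and the middle subspace has dimension |Sᶜ| − |S|. -/
theorem subspace_dimensions_from_cross_rank
    {N : ℕ} (hN : 1 ≤ N)
    (M : Matrix (Fin N) (Fin N) ℝ) (hM : M.PosSemidef)
    (S : Finset (Fin N))
    (Q : Matrix (Fin N) (Fin N) ℝ)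
    (hQ : ∀ i j, Q i j =
      if (i ∈ S ∧ j ∈ S) ∨ (i ∉ S ∧ j ∉ S) then M i j else 0)
    (hQpd : Q.PosDef)
    (lam : Fin N → ℝ)
    (U : Matrix (Fin N) (Fin N) ℝ)
    (hUQU : Uᵀ * Q * U = 1)
    (hMU : M * U = Q * U * Matrix.diagonal lam)
    (r : ℕ)
    (hr : r = (M.submatrix (Subtype.val : {i : Fin N // i ∈ S} → Fin N)
      (Subtype.val : {i : Fin N // i ∉ S} → Fin N)).rank) :
    ((Finset.univ.filter (fun k : Fin N => lam k < 1)).card = r ∧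
     (Finset.univ.filter (fun k : Fin N => 1 < lam k)).card = r ∧
     (Finset.univ.filter (fun k : Fin N => lam k = 1)).card = N - 2 * r) ∧
    (r = S.card → S.card ≤ Sᶜ.card →
      Module.finrank ℝ (Submodule.span ℝ
          {v : Fin N → ℝ | ∃ k : Fin N, lam k < 1 ∧ v = fun i => U i k}) = S.card ∧
      Module.finrank ℝ (Submodule.span ℝ
          {v : Fin N → ℝ | ∃ k : Fin N, 1 < lam k ∧ v = fun i => U i k}) = S.card ∧
      Module.finrank ℝ (Submodule.span ℝ
          {v : Fin N → ℝ | ∃ k : Fin N, lam k = 1 ∧ v = fun i => U i k}) =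
        Sᶜ.card - S.card) := by
  have hMsymm : ∀ i j, M i j = M j i := fun i j => by
    conv_lhs => rw [← hM.1]
    simp [Matrix.conjTranspose_apply]
  -- determinant facts
  have hdetU : IsUnit U.det := by
    have h := congrArg Matrix.det hUQU
    rw [Matrix.det_mul, Matrix.det_mul, Matrix.det_transpose, Matrix.det_one] at h
    exact IsUnit.of_mul_eq_one _ (by rw [← mul_assoc]; exact h)
  have hdetUt : IsUnit Uᵀ.det := by rwa [Matrix.det_transpose]
  have hdetQ : IsUnit Q.det := isUnit_iff_ne_zero.mpr hQpd.det_pos.ne'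
  -- Uᵀ M U = diagonal lam
  have hUtMU : Uᵀ * M * U = Matrix.diagonal lam := by
    rw [Matrix.mul_assoc, hMU, ← Matrix.mul_assoc, ← Matrix.mul_assoc, hUQU, Matrix.one_mul]
  -- congruence for M - Q
  have hC : Uᵀ * (M - Q) * U = Matrix.diagonal (fun k => lam k - 1) := by
    rw [Matrix.mul_sub, Matrix.sub_mul, hUtMU, hUQU, ← Matrix.diagonal_one,
      Matrix.diagonal_sub]
  -- rank of M - Q equals 2r
  have hrankMQ : (M - Q).rank = r + r := by
    classical
    let e : {i : Fin N // i ∈ S} ⊕ {i : Fin N // i ∉ S} ≃ Fin N := Equiv.sumCompl (· ∈ S)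
    have hsub : (M - Q).submatrix e e
        = fromBlocks 0 (M.submatrix Subtype.val Subtype.val)
            (M.submatrix Subtype.val Subtype.val)ᵀ 0 := by
      ext i j
      cases i with
      | inl a =>
        cases j with
        | inl b =>
          simp [e, Matrix.submatrix_apply, hQ, a.2, b.2]
        | inr b =>
          simp [e, Matrix.submatrix_apply, hQ, a.2, b.2]
      | inr a =>
        cases j with
        | inl b =>
          simp [e, Matrix.submatrix_apply, hQ, a.2, b.2, hMsymm a.1 b.1]
        | inr b =>
          simp [e, Matrix.submatrix_apply, hQ, a.2, b.2]
    have hre := Matrix.rank_submatrix (M - Q) e e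
    rw [← hre, hsub, myRankFromBlocks, Matrix.rank_transpose, hr]
  -- rank of the diagonal equals number of lam ≠ 1
  have hrank_ne : (Finset.univ.filter (fun k : Fin N => lam k ≠ 1)).card = r + r := by
    have h1 : (Matrix.diagonal (fun k : Fin N => lam k - 1)).rank = (M - Q).rank := by
      rw [← hC, Matrix.rank_mul_eq_left_of_isUnit_det U _ hdetU,
        Matrix.rank_mul_eq_right_of_isUnit_det Uᵀ _ hdetUt]
    have h2 := Matrix.rank_diagonal (fun k : Fin N => lam k - 1)
    rw [h1, hrankMQ, Fintype.card_subtype] at h2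
    rw [h2]
    congr 1
    apply Finset.filter_congr
    intro k _
    simp [sub_eq_zero]
  -- symmetric spectrum
  have hms : (Finset.univ.val.map (fun k : Fin N => lam k - 1))
      = (Finset.univ.val.map (fun k : Fin N => 1 - lam k)) := by
    set d : Fin N → ℝ := fun i => if i ∈ S then 1 else -1 with hd
    set J : Matrix (Fin N) (Fin N) ℝ := Matrix.diagonal d with hJ
    have hJQJ : J * Q * J = Q := by
      ext i j
      simp only [hJ, Matrix.diagonal_mul, Matrix.mul_diagonal]
      rw [hQ i j]
      by_cases hi : i ∈ S <;> by_cases hj : j ∈ S <;> simp [hd, hi, hj] <;> ring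
    have hJMJ : J * M * J = Q + Q - M := by
      ext i j
      simp only [hJ, Matrix.diagonal_mul, Matrix.mul_diagonal, Matrix.sub_apply,
        Matrix.add_apply]
      rw [hQ i j]
      by_cases hi : i ∈ S <;> by_cases hj : j ∈ S <;> simp [hd, hi, hj] <;> ring
    have hJJ : J * J = 1 := by
      rw [hJ, Matrix.diagonal_mul_diagonal]
      have hdd : (fun i => d i * d i) = fun _ : Fin N => (1 : ℝ) := by
        funext i
        by_cases hi : i ∈ S <;> simp [hd, hi]
      rw [hdd, Matrix.diagonal_one]
    have hdetJ : J.det * J.det = 1 := by rw [← Matrix.det_mul, hJJ, Matrix.det_one]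
    have hdet : ∀ x : ℝ, (Matrix.diagonal (fun k : Fin N => x - (lam k - 1))).det
        = (Matrix.diagonal (fun k : Fin N => x - (1 - lam k))).det := by
      intro x
      have hdg1 : Matrix.diagonal (fun k : Fin N => x - (lam k - 1))
          = x • (1 : Matrix (Fin N) (Fin N) ℝ) + 1 - Matrix.diagonal lam := by
        rw [Matrix.smul_one_eq_diagonal, ← Matrix.diagonal_one, Matrix.diagonal_add,
          Matrix.diagonal_sub]
        exact congrArg Matrix.diagonal (funext fun k => by ring)
      have hdg2 : Matrix.diagonal (fun k : Fin N => x - (1 - lam k))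
          = x • (1 : Matrix (Fin N) (Fin N) ℝ) - 1 + Matrix.diagonal lam := by
        rw [Matrix.smul_one_eq_diagonal, ← Matrix.diagonal_one, Matrix.diagonal_sub,
          Matrix.diagonal_add]
        exact congrArg Matrix.diagonal (funext fun k => by ring)
      have hd1 : Q * U * Matrix.diagonal (fun k : Fin N => x - (lam k - 1))
          = (x • Q + Q - M) * U := by
        rw [hdg1, mul_sub, ← hMU, mul_add, mul_smul_comm, mul_one, sub_mul, add_mul,
          smul_mul_assoc]
      have hd2 : Q * U * Matrix.diagonal (fun k : Fin N => x - (1 - lam k))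
          = (x • Q - Q + M) * U := by
        rw [hdg2, mul_add, ← hMU, mul_sub, mul_smul_comm, mul_one, add_mul, sub_mul,
          smul_mul_assoc]
      have h3 : J * (x • Q + Q - M) * J = x • Q - Q + M := by
        have e1 : J * (x • Q + Q - M) * J = x • (J * Q * J) + J * Q * J - J * M * J := by
          simp only [mul_sub, mul_add, sub_mul, add_mul, mul_smul_comm, smul_mul_assoc,
            Matrix.mul_assoc]
        rw [e1, hJQJ, hJMJ]
        abel
      have E1 : Q.det * U.det * (Matrix.diagonal (fun k : Fin N => x - (lam k - 1))).det
          = (x • Q + Q - M).det * U.det := by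
        have h := congrArg Matrix.det hd1
        rwa [Matrix.det_mul, Matrix.det_mul, Matrix.det_mul] at h
      have E2 : Q.det * U.det * (Matrix.diagonal (fun k : Fin N => x - (1 - lam k))).det
          = (x • Q - Q + M).det * U.det := by
        have h := congrArg Matrix.det hd2
        rwa [Matrix.det_mul, Matrix.det_mul, Matrix.det_mul] at h
      have E3 : (x • Q + Q - M).det = (x • Q - Q + M).det := by
        have h := congrArg Matrix.det h3
        rw [Matrix.det_mul, Matrix.det_mul] at h
        calc (x • Q + Q - M).det = (J.det * J.det) * (x • Q + Q - M).det := by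
              rw [hdetJ, one_mul]
          _ = J.det * (x • Q + Q - M).det * J.det := by ring
          _ = (x • Q - Q + M).det := h
      have hQU0 : Q.det * U.det ≠ 0 := mul_ne_zero hdetQ.ne_zero hdetU.ne_zero
      apply mul_left_cancel₀ hQU0
      rw [E1, E2, E3]
    have hpoly : (Multiset.map (fun a : ℝ => Polynomial.X - Polynomial.C a)
          (Finset.univ.val.map (fun k : Fin N => lam k - 1))).prod
        = (Multiset.map (fun a : ℝ => Polynomial.X - Polynomial.C a)
          (Finset.univ.val.map (fun k : Fin N => 1 - lam k))).prod := by
      apply Polynomial.funext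
      intro x
      rw [Polynomial.eval_multiset_prod, Polynomial.eval_multiset_prod]
      simp only [Multiset.map_map, Function.comp_def, Polynomial.eval_sub,
        Polynomial.eval_X, Polynomial.eval_C]
      have h := hdet x
      rwa [Matrix.det_diagonal, Matrix.det_diagonal, Finset.prod_eq_multiset_prod,
        Finset.prod_eq_multiset_prod] at h
    have h := congrArg Polynomial.roots hpoly
    rwa [Polynomial.roots_multiset_prod_X_sub_C, Polynomial.roots_multiset_prod_X_sub_C] at h
  have hltgt : (Finset.univ.filter (fun k : Fin N => lam k < 1)).card
      = (Finset.univ.filter (fun k : Fin N => 1 < lam k)).card := by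
    have h1 : (Finset.univ.filter (fun k : Fin N => lam k < 1)).card
        = Multiset.countP (fun x : ℝ => x < 0)
            (Finset.univ.val.map (fun k : Fin N => lam k - 1)) := by
      rw [Multiset.countP_map]
      simp only [sub_neg]
      rfl
    have h2 : (Finset.univ.filter (fun k : Fin N => 1 < lam k)).card
        = Multiset.countP (fun x : ℝ => x < 0)
            (Finset.univ.val.map (fun k : Fin N => 1 - lam k)) := by
      rw [Multiset.countP_map]
      simp only [sub_neg]
      rfl
    rw [h1, h2, hms]
  have hsum2 : (Finset.univ.filter (fun k : Fin N => lam k < 1)).card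
      + (Finset.univ.filter (fun k : Fin N => 1 < lam k)).card = r + r := by
    have hunion : (Finset.univ.filter (fun k : Fin N => lam k ≠ 1))
        = Finset.univ.filter (fun k : Fin N => lam k < 1)
          ∪ Finset.univ.filter (fun k : Fin N => 1 < lam k) := by
      rw [← Finset.filter_or]
      apply Finset.filter_congr
      intro k _
      exact ne_iff_lt_or_gt
    have hdisj : Disjoint (Finset.univ.filter (fun k : Fin N => lam k < 1))
        (Finset.univ.filter (fun k : Fin N => 1 < lam k)) := by
      rw [Finset.disjoint_left]
      intro a ha hb
      simp only [Finset.mem_filter] at ha hb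
      exact absurd hb.2 (not_lt.mpr ha.2.le)
    rw [← Finset.card_union_of_disjoint hdisj, ← hunion, hrank_ne]
  have hclt : (Finset.univ.filter (fun k : Fin N => lam k < 1)).card = r := by omega
  have hcgt : (Finset.univ.filter (fun k : Fin N => 1 < lam k)).card = r := by omega
  have hceq : (Finset.univ.filter (fun k : Fin N => lam k = 1)).card = N - 2 * r := by
    have h := Finset.card_filter_add_card_filter_not
      (s := (Finset.univ : Finset (Fin N))) (p := fun k => lam k = 1)
    rw [Finset.card_univ, Fintype.card_fin] at h
    have h2 : (Finset.univ.filter (fun k : Fin N => ¬ lam k = 1)).card = r + r := by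
      rw [← hrank_ne]
    omega
  refine ⟨⟨hclt, hcgt, hceq⟩, ?_⟩
  intro hrS hle
  have hcompl : S.card + Sᶜ.card = N := by
    rw [Finset.card_add_card_compl, Fintype.card_fin]
  have hli : LinearIndependent ℝ (fun k : Fin N => Uᵀ k) :=
    Matrix.linearIndependent_cols_iff_isUnit.mpr ((Matrix.isUnit_iff_isUnit_det U).mpr hdetU)
  have key : ∀ (p : Fin N → Prop) (hp : DecidablePred p),
      Module.finrank ℝ (Submodule.span ℝ
        {v : Fin N → ℝ | ∃ k : Fin N, p k ∧ v = fun i => U i k})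
      = (Finset.univ.filter p).card := by
    intro p hp
    have hset : {v : Fin N → ℝ | ∃ k : Fin N, p k ∧ v = fun i => U i k}
        = Set.range (fun k : {k : Fin N // p k} => Uᵀ k.val) := by
      ext v
      simp only [Set.mem_setOf_eq, Set.mem_range]
      constructor
      · rintro ⟨k, hk, rfl⟩; exact ⟨⟨k, hk⟩, rfl⟩
      · rintro ⟨⟨k, hk⟩, rfl⟩; exact ⟨k, hk, rfl⟩
    rw [hset]
    exact (finrank_span_eq_card (hli.comp Subtype.val Subtype.val_injective)).trans
      (Fintype.card_subtype _)
  refine ⟨?_, ?_, ?_⟩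
  · rw [key _ inferInstance, hclt, hrS]
  · rw [key _ inferInstance, hcgt, hrS]
  · rw [key _ inferInstance, hceq]
    omega
end

section
/- (Expected reconstruction error) Under the spectral-folding setup with M positive definite and |L| = |H| = |S| = s, let x be a random vector in ℝᴺ with mean zero and covariance M⁻¹ (e.g., Gaussian with covariance M⁻¹), and let x̃ = 2 U_{VL} U_{SL}ᵀ Q_S x_S. Then the expected squared Q-norm reconstruction error equals E[‖x̃ − x‖²_Q] = 2 Σ_{k∈H} (1/λ_k) + (N − 2s). -/
open Matrix MeasureTheory

/-- Expected reconstruction error: under the spectral-folding setup with M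
positive definite and |L| = |H| = |S| = s, if x is a random vector with mean
zero and covariance M⁻¹, and x̃ = 2 U_{VL} U_{SL}ᵀ Q_S x_S, then
E[‖x̃ − x‖²_Q] = 2 Σ_{k∈H} 1/λ_k + (N − 2s). -/
theorem expected_reconstruction_error
    {N s : ℕ} (hN : 1 ≤ N)
    (M : Matrix (Fin N) (Fin N) ℝ) (hM : M.PosDef)
    (S : Finset (Fin N)) (hsS : s = S.card)
    (J : Matrix (Fin N) (Fin N) ℝ)
    (hJ : J = Matrix.diagonal (fun i => if i ∈ S then (1 : ℝ) else -1))
    (Q : Matrix (Fin N) (Fin N) ℝ)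
    (hQ : ∀ i j, Q i j =
      if (i ∈ S ∧ j ∈ S) ∨ (i ∉ S ∧ j ∉ S) then M i j else 0)
    (lam : Fin N → ℝ) (hlam : Monotone lam)
    (U : Matrix (Fin N) (Fin N) ℝ)
    (hUQU : Uᵀ * Q * U = 1)
    (hMU : M * U = Q * U * Matrix.diagonal lam)
    (hfold : ∀ k : Fin N, (fun i => U i k.rev) = J.mulVec (fun i => U i k))
    (hcardL : Fintype.card {k : Fin N // lam k < 1} = s)
    (hcardH : Fintype.card {k : Fin N // 1 < lam k} = s)
    (QS : Matrix {i : Fin N // i ∈ S} {i : Fin N // i ∈ S} ℝ)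
    (hQS : QS = M.submatrix Subtype.val Subtype.val)
    (UVL : Matrix (Fin N) {k : Fin N // lam k < 1} ℝ)
    (hUVL : UVL = U.submatrix id Subtype.val)
    (USL : Matrix {i : Fin N // i ∈ S} {k : Fin N // lam k < 1} ℝ)
    (hUSL : USL = U.submatrix Subtype.val Subtype.val)
    {Ω : Type*} [MeasurableSpace Ω] (μ : Measure Ω) [IsProbabilityMeasure μ]
    (x : Ω → Fin N → ℝ)
    (hintx : ∀ i, Integrable (fun ω => x ω i) μ)
    (hmean : ∀ i, ∫ ω, x ω i ∂μ = 0)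
    (hintxx : ∀ i j, Integrable (fun ω => x ω i * x ω j) μ)
    (hcov : ∀ i j, ∫ ω, x ω i * x ω j ∂μ = M⁻¹ i j)
    (xt : Ω → Fin N → ℝ)
    (hxt : ∀ ω, xt ω = ((2 : ℝ) • (UVL * (USLᵀ * QS))).mulVec
      (fun j : {i : Fin N // i ∈ S} => x ω j.val)) :
    ∫ ω, (xt ω - x ω) ⬝ᵥ Q.mulVec (xt ω - x ω) ∂μ =
      2 * (∑ k ∈ Finset.univ.filter (fun k : Fin N => 1 < lam k), (lam k)⁻¹) +
        ((N : ℝ) - 2 * s) := by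
  classical
  have hcardLf : (Finset.univ.filter fun k : Fin N => lam k < 1).card = s := by
    rw [← hcardL, Fintype.card_subtype]
  have hcardHf : (Finset.univ.filter fun k : Fin N => 1 < lam k).card = s := by
    rw [← hcardH, Fintype.card_subtype]
  have h2s : 2 * s ≤ N := by
    have hdisj : Disjoint (Finset.univ.filter fun k : Fin N => lam k < 1)
        (Finset.univ.filter fun k : Fin N => 1 < lam k) := by
      rw [Finset.disjoint_left]
      intro a ha hb
      simp only [Finset.mem_filter, Finset.mem_univ, true_and] at ha hb
      linarith
    have hcu := Finset.card_union_of_disjoint hdisj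
    have hle := Finset.card_le_univ ((Finset.univ.filter fun k : Fin N => lam k < 1)
      ∪ (Finset.univ.filter fun k : Fin N => 1 < lam k))
    rw [hcu, hcardLf, hcardHf] at hle
    have hfin : Fintype.card (Fin N) = N := Fintype.card_fin N
    have := Finset.card_univ (α := Fin N)
    omega
  have hL : ∀ k : Fin N, lam k < 1 ↔ (k : ℕ) < s := by
    intro k
    constructor
    · intro hk
      have hsub : Finset.Iic k ⊆ Finset.univ.filter fun j : Fin N => lam j < 1 := by
        intro j hj
        simp only [Finset.mem_Iic] at hj
        simp only [Finset.mem_filter, Finset.mem_univ, true_and]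
        exact lt_of_le_of_lt (hlam hj) hk
      have hc := Finset.card_le_card hsub
      rw [Fin.card_Iic, hcardLf] at hc
      omega
    · intro hk
      by_contra hnk
      have hsub : (Finset.univ.filter fun j : Fin N => lam j < 1) ⊆ Finset.Iio k := by
        intro j hj
        simp only [Finset.mem_filter, Finset.mem_univ, true_and] at hj
        simp only [Finset.mem_Iio]
        by_contra hjk
        exact hnk (lt_of_le_of_lt (hlam (le_of_not_gt hjk)) hj)
      have hc := Finset.card_le_card hsub
      rw [Fin.card_Iio, hcardLf] at hc
      omega
  have hH : ∀ k : Fin N, 1 < lam k ↔ N - s ≤ (k : ℕ) := by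
    intro k
    have hkN := k.isLt
    constructor
    · intro hk
      have hsub : Finset.Ici k ⊆ Finset.univ.filter fun j : Fin N => 1 < lam j := by
        intro j hj
        simp only [Finset.mem_Ici] at hj
        simp only [Finset.mem_filter, Finset.mem_univ, true_and]
        exact lt_of_lt_of_le hk (hlam hj)
      have hc := Finset.card_le_card hsub
      rw [Fin.card_Ici, hcardHf] at hc
      omega
    · intro hk
      by_contra hnk
      have hsub : (Finset.univ.filter fun j : Fin N => 1 < lam j) ⊆ Finset.Ioi k := by
        intro j hj
        simp only [Finset.mem_filter, Finset.mem_univ, true_and] at hj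
        simp only [Finset.mem_Ioi]
        by_contra hjk
        exact hnk (lt_of_lt_of_le hj (hlam (le_of_not_gt hjk)))
      have hc := Finset.card_le_card hsub
      rw [Fin.card_Ioi, hcardHf] at hc
      omega
  have hrev : ∀ k : Fin N, lam k < 1 ↔ 1 < lam k.rev := by
    intro k
    have hkN := k.isLt
    rw [hL k, hH k.rev, Fin.val_rev]
    omega
  have hrev' : ∀ k : Fin N, 1 < lam k ↔ lam k.rev < 1 := by
    intro k
    conv_lhs => rw [← Fin.rev_rev k]
    exact (hrev k.rev).symm
  have hmidcard : (Finset.univ.filter fun k : Fin N => ¬ 1 < lam k ∧ ¬ lam k < 1).card = N - 2 * s := by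
    have e1 := Finset.card_filter_add_card_filter_not
      (s := (Finset.univ : Finset (Fin N))) (p := fun k => 1 < lam k)
    have e2 := Finset.card_filter_add_card_filter_not
      (s := Finset.univ.filter fun k : Fin N => ¬ 1 < lam k) (p := fun k => lam k < 1)
    rw [Finset.filter_filter, Finset.filter_filter] at e2
    have e3 : (Finset.univ.filter fun k : Fin N => ¬ 1 < lam k ∧ lam k < 1)
        = Finset.univ.filter fun k : Fin N => lam k < 1 := by
      apply Finset.filter_congr
      intro k _
      constructor
      · exact fun h => h.2
      · exact fun h => ⟨by linarith, h⟩
    rw [e3, hcardLf] at e2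
    rw [hcardHf, Finset.card_univ, Fintype.card_fin] at e1
    omega
  set Λi : Matrix (Fin N) (Fin N) ℝ := Matrix.diagonal (fun k => (lam k)⁻¹) with hΛidef
  set PL : Matrix (Fin N) (Fin N) ℝ :=
    Matrix.diagonal (fun k => if lam k < 1 then (1:ℝ) else 0) with hPLdef
  set R : Matrix (Fin N) (Fin N) ℝ :=
    Matrix.of (fun j k : Fin N => if j = k.rev then (1:ℝ) else 0) with hRdef
  set W : Matrix (Fin N) (Fin N) ℝ :=
    Matrix.of (fun i j : Fin N => if i ∈ S ∧ j ∈ S then M i j else 0) with hWdef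
  set A : Matrix (Fin N) (Fin N) ℝ := (2:ℝ) • (U * PL * Uᵀ * W) with hAdef
  set B : Matrix (Fin N) (Fin N) ℝ := A - 1 with hBdef
  set C : Matrix (Fin N) (Fin N) ℝ := PL * (1 + R) - 1 with hCdef
  set G : Matrix (Fin N) (Fin N) ℝ := Bᵀ * Q * B with hGdef
  have hMsymm : ∀ i j, M j i = M i j := by
    intro i j
    have h := congrFun (congrFun hM.1 i) j
    rwa [Matrix.conjTranspose_apply, star_trivial] at h
  have hQ0 : ∀ i j : Fin N, ((i ∈ S ∧ j ∉ S) ∨ (i ∉ S ∧ j ∈ S)) → Q i j = 0 := by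
    intro i j h
    rw [hQ i j, if_neg]
    tauto
  have hQsymm : Qᵀ = Q := by
    ext i j
    rw [Matrix.transpose_apply, hQ j i, hQ i j]
    by_cases h : (i ∈ S ∧ j ∈ S) ∨ (i ∉ S ∧ j ∉ S)
    · rw [if_pos (by tauto), if_pos h]
      exact hMsymm i j
    · rw [if_neg (by tauto), if_neg h]
  have hJQ : J * Q = Q * J := by
    ext i j
    rw [hJ, Matrix.diagonal_mul, Matrix.mul_diagonal]
    by_cases hi : i ∈ S <;> by_cases hj : j ∈ S
    · rw [if_pos hi, if_pos hj]
      ring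
    · rw [if_pos hi, if_neg hj, hQ0 i j (Or.inl ⟨hi, hj⟩)]
      ring
    · rw [if_neg hi, if_pos hj, hQ0 i j (Or.inr ⟨hi, hj⟩)]
      ring
    · rw [if_neg hi, if_neg hj]
      ring
  have hWQ : W = (2⁻¹:ℝ) • (Q + J * Q) := by
    ext i j
    have hrhs : ((2⁻¹:ℝ) • (Q + J * Q)) i j
        = 2⁻¹ * (Q i j + (if i ∈ S then (1:ℝ) else -1) * Q i j) := by
      rw [Matrix.smul_apply, Matrix.add_apply, hJ, Matrix.diagonal_mul, smul_eq_mul]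
    rw [hrhs, hWdef]
    simp only [Matrix.of_apply]
    by_cases hi : i ∈ S <;> by_cases hj : j ∈ S
    · rw [if_pos ⟨hi, hj⟩, if_pos hi, hQ i j, if_pos (Or.inl ⟨hi, hj⟩)]
      ring
    · rw [if_neg (by tauto), if_pos hi, hQ0 i j (Or.inl ⟨hi, hj⟩)]
      ring
    · rw [if_neg (by tauto), if_neg hi]
      ring
    · rw [if_neg (by tauto), if_neg hi]
      ring
  have hJU : J * U = U * R := by
    ext i k
    have hl : (J * U) i k = (if i ∈ S then (1:ℝ) else -1) * U i k := by
      rw [hJ, Matrix.diagonal_mul]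
    have hr : (U * R) i k = U i k.rev := by
      rw [hRdef]
      simp [Matrix.mul_apply, Matrix.of_apply, mul_ite, mul_one, mul_zero]
    rw [hl, hr]
    have h := congrFun (hfold k) i
    rw [h, hJ, Matrix.mulVec_diagonal]
  have hUUQ : U * (Uᵀ * Q) = 1 := mul_eq_one_comm.mp hUQU
  have hQUUt : Q * U * Uᵀ = 1 := by
    have h := congrArg Matrix.transpose hUUQ
    rwa [Matrix.transpose_mul, Matrix.transpose_mul, Matrix.transpose_transpose,
      hQsymm, Matrix.transpose_one] at h
  have hUMU : Uᵀ * M * U = Matrix.diagonal lam := by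
    rw [Matrix.mul_assoc, hMU, ← Matrix.mul_assoc, ← Matrix.mul_assoc, hUQU, Matrix.one_mul]
  have hlamne : ∀ k : Fin N, lam k ≠ 0 := by
    intro k
    have hcol : (fun i => U i k) ≠ 0 := by
      intro h0
      have hU0 : ∀ i, U i k = 0 := fun i => congrFun h0 i
      have h1 := congrFun (congrFun hUQU k) k
      rw [Matrix.one_apply_eq] at h1
      rw [Matrix.mul_apply] at h1
      simp only [hU0, mul_zero, Finset.sum_const_zero] at h1
      exact zero_ne_one h1
    have hpos := hM.dotProduct_mulVec_pos hcol
    have hval : star (fun i => U i k) ⬝ᵥ M.mulVec (fun i => U i k) = lam k := by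
      have h2 := congrFun (congrFun hUMU k) k
      rw [Matrix.diagonal_apply_eq] at h2
      rw [← h2]
      simp only [Matrix.mul_apply, Matrix.mulVec, dotProduct, Matrix.transpose_apply,
        Pi.star_apply, star_trivial, Finset.sum_mul, Finset.mul_sum]
      rw [Finset.sum_comm]
      exact Finset.sum_congr rfl fun i _ => Finset.sum_congr rfl fun j _ => by ring
    rw [hval] at hpos
    exact ne_of_gt hpos
  have hdd : Matrix.diagonal lam * Λi = 1 := by
    rw [hΛidef, Matrix.diagonal_mul_diagonal]
    have he : (fun i => lam i * (lam i)⁻¹) = fun _ : Fin N => (1:ℝ) := by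
      funext k
      exact mul_inv_cancel₀ (hlamne k)
    rw [he, Matrix.diagonal_one]
  have hMinv : M⁻¹ = U * Λi * Uᵀ := by
    apply Matrix.inv_eq_right_inv
    calc M * (U * Λi * Uᵀ) = M * U * Λi * Uᵀ := by rw [← Matrix.mul_assoc, ← Matrix.mul_assoc]
      _ = Q * U * (Matrix.diagonal lam * Λi) * Uᵀ := by
          rw [hMU, Matrix.mul_assoc (Q * U) (Matrix.diagonal lam) Λi]
      _ = Q * U * Uᵀ := by rw [hdd, Matrix.mul_one]
      _ = 1 := hQUUt
  have hXsymm : (U * Λi * Uᵀ)ᵀ = U * Λi * Uᵀ := by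
    rw [Matrix.transpose_mul, Matrix.transpose_mul, Matrix.transpose_transpose, hΛidef,
      Matrix.diagonal_transpose, Matrix.mul_assoc]
  have hUWU : Uᵀ * W * U = (2⁻¹:ℝ) • (1 + R) := by
    rw [hWQ, Matrix.mul_smul, Matrix.smul_mul]
    congr 1
    have e1 : Uᵀ * (J * Q) * U = R := by
      rw [hJQ]
      calc Uᵀ * (Q * J) * U = Uᵀ * Q * (J * U) := by
            rw [← Matrix.mul_assoc, Matrix.mul_assoc (Uᵀ * Q) J U]
        _ = Uᵀ * Q * U * R := by rw [hJU, ← Matrix.mul_assoc]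
        _ = R := by rw [hUQU, Matrix.one_mul]
    rw [Matrix.mul_add, Matrix.add_mul, hUQU, e1]
  have hAU : A * U = U * (PL * (1 + R)) := by
    rw [hAdef, Matrix.smul_mul]
    have h1 : U * PL * Uᵀ * W * U = U * PL * (Uᵀ * W * U) := by
      rw [Matrix.mul_assoc (U * PL) Uᵀ W, Matrix.mul_assoc (U * PL) (Uᵀ * W) U]
    rw [h1, hUWU, Matrix.mul_smul, smul_smul]
    rw [show (2:ℝ) * 2⁻¹ = 1 by norm_num, one_smul, Matrix.mul_assoc]
  have hBU : B * U = U * C := by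
    rw [hBdef, hCdef, Matrix.sub_mul, Matrix.one_mul, Matrix.mul_sub, Matrix.mul_one, hAU]
  have hkey : Uᵀ * Bᵀ * Q * B * U = Cᵀ * C := by
    have t1 : Uᵀ * Bᵀ = (U * C)ᵀ := by rw [← hBU, Matrix.transpose_mul]
    calc Uᵀ * Bᵀ * Q * B * U = (Uᵀ * Bᵀ) * Q * (B * U) := by
          rw [Matrix.mul_assoc (Uᵀ * Bᵀ * Q) B U]
      _ = (U * C)ᵀ * Q * (U * C) := by rw [t1, hBU]
      _ = Cᵀ * (Uᵀ * Q * U) * C := by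
          rw [Matrix.transpose_mul]
          simp only [Matrix.mul_assoc]
      _ = Cᵀ * C := by rw [hUQU, Matrix.mul_one]
  have hCapp : ∀ j k : Fin N, C j k = (if lam j < 1 then (1:ℝ) else 0) *
      ((if j = k then (1:ℝ) else 0) + (if j = k.rev then (1:ℝ) else 0))
      - (if j = k then (1:ℝ) else 0) := by
    intro j k
    rw [hCdef, Matrix.sub_apply, hPLdef, Matrix.diagonal_mul, Matrix.add_apply,
      Matrix.one_apply, hRdef, Matrix.of_apply]
  have hCC : ∀ k : Fin N, (Cᵀ * C) k k = if lam k < 1 then (0:ℝ) else if 1 < lam k then 2 else 1 := by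
    intro k
    have hexp : (Cᵀ * C) k k = ∑ j, C j k * C j k := by
      simp [Matrix.mul_apply, Matrix.transpose_apply]
    rw [hexp]
    by_cases hk : lam k < 1
    · have hkr : 1 < lam k.rev := (hrev k).1 hk
      have hne : k ≠ k.rev := by
        intro h
        rw [← h] at hkr
        linarith
      rw [if_pos hk]
      apply Finset.sum_eq_zero
      intro j _
      rw [hCapp j k]
      have hnl : ¬ lam k.rev < 1 := by linarith
      by_cases hj1 : j = k
      · subst hj1
        simp [hk, hne]
      · by_cases hj2 : j = k.rev
        · subst hj2
          simp [hj1, hnl]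
        · simp [hj1, hj2]
    · rw [if_neg hk]
      by_cases hk2 : 1 < lam k
      · rw [if_pos hk2]
        have hkr : lam k.rev < 1 := (hrev' k).1 hk2
        have hne : k ≠ k.rev := by
          intro h
          rw [← h] at hkr
          exact hk hkr
        have hform : ∀ j, C j k * C j k
            = (if j = k.rev then (1:ℝ) else 0) + (if j = k then 1 else 0) := by
          intro j
          rw [hCapp j k]
          by_cases hj1 : j = k
          · subst hj1
            simp [hk, hne]
          · by_cases hj2 : j = k.rev
            · subst hj2
              simp [hkr, hj1]
            · simp [hj1, hj2]
        rw [Finset.sum_congr rfl (fun j _ => hform j), Finset.sum_add_distrib,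
          Finset.sum_ite_eq' Finset.univ k.rev (fun _ => (1:ℝ)),
          Finset.sum_ite_eq' Finset.univ k (fun _ => (1:ℝ))]
        simp
        norm_num
      · rw [if_neg hk2]
        have h1 : ¬ lam k.rev < 1 := by
          intro h
          have := (hrev k.rev).1 h
          rw [Fin.rev_rev] at this
          exact hk2 this
        have hform : ∀ j, C j k * C j k = if j = k then (1:ℝ) else 0 := by
          intro j
          rw [hCapp j k]
          by_cases hj1 : j = k
          · subst hj1
            simp [hk]
          · by_cases hj2 : j = k.rev
            · subst hj2
              simp [h1, hj1]
            · simp [hj1, hj2]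
        rw [Finset.sum_congr rfl (fun j _ => hform j),
          Finset.sum_ite_eq' Finset.univ k (fun _ => (1:ℝ))]
        simp
  have hfinal : (∑ k, (Cᵀ * C) k k * (lam k)⁻¹)
      = 2 * (∑ k ∈ Finset.univ.filter (fun k : Fin N => 1 < lam k), (lam k)⁻¹)
        + ((N : ℝ) - 2 * s) := by
    rw [← Finset.sum_filter_add_sum_filter_not Finset.univ (fun k : Fin N => 1 < lam k)
      (fun k => (Cᵀ * C) k k * (lam k)⁻¹)]
    congr 1
    · rw [Finset.mul_sum]
      apply Finset.sum_congr rfl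
      intro k hkmem
      simp only [Finset.mem_filter, Finset.mem_univ, true_and] at hkmem
      rw [hCC k, if_neg (by linarith), if_pos hkmem]
    · have hterm : ∀ k ∈ Finset.univ.filter (fun k : Fin N => ¬ 1 < lam k),
          (Cᵀ * C) k k * (lam k)⁻¹ = if lam k < 1 then (0:ℝ) else 1 := by
        intro k hkmem
        simp only [Finset.mem_filter, Finset.mem_univ, true_and] at hkmem
        rw [hCC k]
        by_cases hk : lam k < 1
        · rw [if_pos hk, if_pos hk]
          ring
        · have hk1 : lam k = 1 := le_antisymm (not_lt.1 hkmem) (not_lt.1 hk)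
          rw [if_neg hk, if_neg hkmem, if_neg hk, hk1]
          norm_num
      rw [Finset.sum_congr rfl hterm]
      have hswap : ∀ k : Fin N, (if lam k < 1 then (0:ℝ) else 1)
          = if ¬ lam k < 1 then (1:ℝ) else 0 := by
        intro k
        by_cases hk : lam k < 1 <;> simp [hk]
      rw [Finset.sum_congr rfl (fun k _ => hswap k), ← Finset.sum_filter, Finset.filter_filter,
        Finset.sum_const, hmidcard]
      rw [nsmul_eq_mul, mul_one, Nat.cast_sub h2s]
      push_cast
      ring
  have hxtA : ∀ ω, xt ω = A.mulVec (x ω) := by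
    intro ω
    rw [hxt ω]
    funext i
    simp only [Matrix.mulVec, dotProduct, Matrix.smul_apply, smul_eq_mul, Matrix.mul_apply,
      hUVL, hUSL, hQS, Matrix.submatrix_apply, Matrix.transpose_apply, id_eq]
    have hLf : ∀ (f : Fin N → ℝ), (∑ k ∈ Finset.univ.filter (fun k : Fin N => lam k < 1), f k)
        = ∑ k : {k : Fin N // lam k < 1}, f k.val := by
      intro f
      exact Finset.sum_subtype _ (by simp) f
    have hSf : ∀ (f : Fin N → ℝ), (∑ b ∈ S, f b) = ∑ b : {i : Fin N // i ∈ S}, f b.val := by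
      intro f
      exact Finset.sum_subtype _ (fun x => Iff.rfl) f
    have lhs_eq : (∑ a : { i : Fin N // i ∈ S },
        (2 * ∑ k : { k : Fin N // lam k < 1 }, U i k.val * ∑ b : { i : Fin N // i ∈ S },
          U b.val k.val * M b.val a.val) * (x ω) a.val)
        = ∑ a ∈ S, (2 * ∑ k ∈ Finset.univ.filter (fun k : Fin N => lam k < 1),
            U i k * ∑ b ∈ S, U b k * M b a) * (x ω) a := by
      rw [hSf (fun a => (2 * ∑ k ∈ Finset.univ.filter (fun k : Fin N => lam k < 1),
        U i k * ∑ b ∈ S, U b k * M b a) * (x ω) a)]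
      apply Finset.sum_congr rfl
      intro a _
      congr 1
      congr 1
      rw [hLf (fun k => U i k * ∑ b ∈ S, U b k * M b a.val)]
      apply Finset.sum_congr rfl
      intro k _
      congr 1
      exact (hSf (fun b => U b k.val * M b a.val)).symm
    rw [lhs_eq]
    have hAapp : ∀ j : Fin N, A i j
        = if j ∈ S then 2 * ∑ b ∈ S, (∑ k ∈ Finset.univ.filter (fun k : Fin N => lam k < 1),
            U i k * U b k) * M b j else 0 := by
      intro j
      rw [hAdef]
      simp only [Matrix.smul_apply, smul_eq_mul, Matrix.mul_apply, Matrix.transpose_apply,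
        hWdef, Matrix.of_apply, hPLdef, Matrix.diagonal_apply, mul_ite, mul_zero, ite_mul,
        zero_mul, mul_one, Finset.sum_ite_eq', Finset.mem_univ, if_true]
      by_cases hj : j ∈ S
      · rw [if_pos hj]
        simp only [hj, and_true]
        rw [Finset.sum_ite_mem, Finset.univ_inter]
        congr 1
        apply Finset.sum_congr rfl
        intro b _
        congr 1
        rw [Finset.sum_filter]
      · rw [if_neg hj]
        simp [hj]
    have step1 : (∑ j : Fin N, A i j * (x ω) j)
        = ∑ j ∈ S, (2 * ∑ b ∈ S, (∑ k ∈ Finset.univ.filter (fun k : Fin N => lam k < 1),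
            U i k * U b k) * M b j) * (x ω) j := by
      rw [Finset.sum_congr rfl (fun j _ => by rw [hAapp j])]
      simp only [ite_mul, zero_mul]
      rw [Finset.sum_ite_mem, Finset.univ_inter]
    rw [step1]
    apply Finset.sum_congr rfl
    intro a ha
    congr 1
    congr 1
    simp only [Finset.mul_sum, Finset.sum_mul]
    rw [Finset.sum_comm]
    apply Finset.sum_congr rfl
    intro b _
    apply Finset.sum_congr rfl
    intro k _
    ring
  have hxtB : ∀ ω, xt ω - x ω = B.mulVec (x ω) := by
    intro ω
    rw [hxtA ω, hBdef, Matrix.sub_mulVec, Matrix.one_mulVec]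
  have hdot : ∀ v : Fin N → ℝ, (B.mulVec v) ⬝ᵥ Q.mulVec (B.mulVec v)
      = ∑ i, ∑ j, G i j * (v i * v j) := by
    intro v
    have h1 : G.mulVec v = Bᵀ.mulVec (Q.mulVec (B.mulVec v)) := by
      rw [hGdef, ← Matrix.mulVec_mulVec, ← Matrix.mulVec_mulVec]
    have h2 : v ⬝ᵥ G.mulVec v = (B.mulVec v) ⬝ᵥ Q.mulVec (B.mulVec v) := by
      rw [h1, Matrix.dotProduct_mulVec v Bᵀ, Matrix.vecMul_transpose]
    rw [← h2]
    simp only [dotProduct, Matrix.mulVec, Finset.mul_sum]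
    exact Finset.sum_congr rfl fun i _ => Finset.sum_congr rfl fun j _ => by ring
  have heq2 : ∀ ω, (xt ω - x ω) ⬝ᵥ Q.mulVec (xt ω - x ω)
      = ∑ i, ∑ j, G i j * (x ω i * x ω j) := by
    intro ω
    rw [hxtB ω]
    exact hdot (x ω)
  have hint : ∫ ω, (xt ω - x ω) ⬝ᵥ Q.mulVec (xt ω - x ω) ∂μ
      = ∑ i, ∑ j, G i j * M⁻¹ i j := by
    rw [integral_congr_ae (Filter.Eventually.of_forall heq2)]
    rw [integral_finset_sum _ (f := fun i ω => ∑ j, G i j * (x ω i * x ω j)) (fun i _ => integrable_finset_sum _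
      (fun j _ => (hintxx i j).const_mul _))]
    apply Finset.sum_congr rfl
    intro i _
    rw [integral_finset_sum _ (f := fun j ω => G i j * (x ω i * x ω j)) (fun j _ => (hintxx i j).const_mul _)]
    apply Finset.sum_congr rfl
    intro j _
    rw [integral_const_mul, hcov i j]
  have htr1 : (∑ i, ∑ j, G i j * M⁻¹ i j) = Matrix.trace (G * (U * Λi * Uᵀ)) := by
    rw [Matrix.trace]
    apply Finset.sum_congr rfl
    intro i _
    rw [Matrix.diag_apply, Matrix.mul_apply]
    apply Finset.sum_congr rfl
    intro j _
    rw [hMinv]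
    have h := congrFun (congrFun hXsymm j) i
    rw [Matrix.transpose_apply] at h
    rw [← h]
  have hGU : Uᵀ * (G * (U * Λi)) = Cᵀ * C * Λi := by
    rw [hGdef]
    calc Uᵀ * (Bᵀ * Q * B * (U * Λi)) = (Uᵀ * Bᵀ * Q * B * U) * Λi := by
          simp only [Matrix.mul_assoc]
      _ = Cᵀ * C * Λi := by rw [hkey]
  have htr2 : Matrix.trace (G * (U * Λi * Uᵀ)) = Matrix.trace (Cᵀ * C * Λi) := by
    have hassoc : G * (U * Λi * Uᵀ) = (G * (U * Λi)) * Uᵀ := by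
      simp only [Matrix.mul_assoc]
    rw [hassoc, Matrix.trace_mul_comm, hGU]
  have htr3 : Matrix.trace (Cᵀ * C * Λi) = ∑ k, (Cᵀ * C) k k * (lam k)⁻¹ := by
    rw [hΛidef, Matrix.trace]
    apply Finset.sum_congr rfl
    intro k _
    rw [Matrix.diag_apply, Matrix.mul_diagonal]
  exact hint.trans (htr1.trans (htr2.trans (htr3.trans hfinal)))
end
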